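/- Let T = (V,E) be an X-tree with a proper T-cherry a,b with common neighbor v, and set U := V − {a,b}. Then a subset L of binom(X,2) is a tight edge-weight lasso for T if and only if |L| = |E|, conditions (U1) ab ∈ L and (U2) L_U is an edge-weight lasso for T_U hold, and at least one of the following holds: (U3-a') L_U is a tight edge-weight lasso for T_U (i.e. |L_U| = |E_U|), or (U3-b') |L_U| = |E_U| + 1 = |L| − 1 and Σ_{x ∈ X(a,L^{ab})} ρ_U(xv) ≠ 0 holds for every non-zero map ρ_U : binom(X_U,2) → ℝ with support contained in L_U satisfying Σ_{xy ∈ L_U} ρ_U(xy)·λ^{T_U}_{xy} = 0. -/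

import Mathlib

/- Common definitions for formalizing results of Dress, Huber & Steel,
   "Lassoing a phylogenetic tree I: Basic properties, shellings, and covers".

   Trees are modelled as simple graphs on an ambient vertex type `U`;
   the vertex set of the tree is the support of the graph (every vertex of a
   tree with at least two vertices has degree >= 1). -/

noncomputable section
open scoped Classical

namespace Lasso

variable {U : Type}

/-- The degree of a vertex. -/
def deg (G : SimpleGraph U) (v : U) : ℕ := (G.neighborSet v).ncard

/-- A leaf is a vertex of degree `1`. -/
def IsLeaf (G : SimpleGraph U) (v : U) : Prop := deg G v = 1

/-- An interior vertex: a non-leaf vertex of the tree. -/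
def Interior (G : SimpleGraph U) (v : U) : Prop := v ∈ G.support ∧ ¬ IsLeaf G v

/-- `G` is an `X`-tree: a finite tree without vertices of degree two whose
    leaf set is exactly `X`. -/
structure IsXTree (X : Set U) (G : SimpleGraph U) : Prop where
  support_finite : G.support.Finite
  support_nonempty : G.support.Nonempty
  connected : ∀ a ∈ G.support, ∀ b ∈ G.support, G.Reachable a b
  acyclic : G.IsAcyclic
  no_deg_two : ∀ v : U, deg G v ≠ 2
  leaves_eq : X = {v : U | IsLeaf G v}

/-- An edge weighting of `G`: nonnegative, and zero away from the edges of `G`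
    (so that it represents an element of `ℝ_{≥0}^E`). -/
structure IsWeighting (G : SimpleGraph U) (ω : Sym2 U → ℝ) : Prop where
  nonneg : ∀ e, 0 ≤ ω e
  zero_off : ∀ e, e ∉ G.edgeSet → ω e = 0

/-- A proper edge weighting: in addition strictly positive on interior edges
    (edges both of whose endpoints are non-leaves). -/
structure IsProperWeighting (G : SimpleGraph U) (ω : Sym2 U → ℝ)
    extends IsWeighting G ω : Prop where
  interior_pos : ∀ e ∈ G.edgeSet, (∀ u ∈ e, ¬ IsLeaf G u) → 0 < ω e

/-- The set `E_T(x|y)` of edges separating `x` from `y`, i.e. the edges lying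
    on every walk from `x` to `y` (in a tree: the edges of the path). -/
def pathEdges (G : SimpleGraph U) (x y : U) : Set (Sym2 U) :=
  {e | e ∈ G.edgeSet ∧ ∀ p : G.Walk x y, e ∈ p.edges}

/-- The induced distance `D_ω(x,y)`. -/
def tdist (G : SimpleGraph U) (ω : Sym2 U → ℝ) (x y : U) : ℝ :=
  ∑ᶠ e ∈ pathEdges G x y, ω e

/-- Path edge set of an unordered pair. -/
def pairPathEdges (G : SimpleGraph U) (c : Sym2 U) : Set (Sym2 U) :=
  {e | e ∈ G.edgeSet ∧ ∀ x y : U, c = s(x, y) → ∀ p : G.Walk x y, e ∈ p.edges}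

/-- `D_ω` on an unordered pair (a cord); `λ^T_c(ω)`. -/
def pdist (G : SimpleGraph U) (ω : Sym2 U → ℝ) (c : Sym2 U) : ℝ :=
  ∑ᶠ e ∈ pairPathEdges G c, ω e

/-- `(G,ω)` and `(G',ω')` are `L`-isometric. -/
def LIso (L : Set (Sym2 U)) (G : SimpleGraph U) (ω : Sym2 U → ℝ)
    (G' : SimpleGraph U) (ω' : Sym2 U → ℝ) : Prop :=
  ∀ x y : U, s(x, y) ∈ L → tdist G ω x y = tdist G' ω' x y

/-- `L` is a set of cords of `X`: 2-element subsets of `X`. -/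
def IsCordSet (X : Set U) (L : Set (Sym2 U)) : Prop :=
  ∀ c ∈ L, ¬ c.IsDiag ∧ ∀ u ∈ c, u ∈ X

/-- The union of all cords in `L`. -/
def cup (L : Set (Sym2 U)) : Set U := {v | ∃ c ∈ L, v ∈ c}

/-- `L` is an edge-weight lasso for `G`. -/
def EdgeWeightLasso (G : SimpleGraph U) (L : Set (Sym2 U)) : Prop :=
  ∀ ω ω' : Sym2 U → ℝ, IsProperWeighting G ω → IsProperWeighting G ω' →
    LIso L G ω G ω' → ω = ω'

/-- `G ≃ G'` via a graph isomorphism fixing `X` pointwise. -/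
def FixingIso (X : Set U) (G G' : SimpleGraph U) : Prop :=
  ∃ φ : G ≃g G', ∀ x ∈ X, φ x = x

/-- `(G,ω)` and `(G',ω')` are isometric: a graph isomorphism fixing `X`
    pointwise and preserving edge weights. -/
def FixingIsometry (X : Set U) (G G' : SimpleGraph U) (ω ω' : Sym2 U → ℝ) : Prop :=
  ∃ φ : G ≃g G', (∀ x ∈ X, φ x = x) ∧
    ∀ e ∈ G.edgeSet, ω' (Sym2.map (fun u => φ u) e) = ω e

/-- `L` is a topological lasso for the `X`-tree `G`. -/
def TopologicalLasso (X : Set U) (G : SimpleGraph U) (L : Set (Sym2 U)) : Prop :=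
  ∀ G' : SimpleGraph U, IsXTree X G' →
    ∀ ω ω' : Sym2 U → ℝ, IsProperWeighting G ω → IsProperWeighting G' ω' →
      LIso L G ω G' ω' → FixingIso X G G'

/-- `L` is a strong lasso for the `X`-tree `G`. -/
def StrongLasso (X : Set U) (G : SimpleGraph U) (L : Set (Sym2 U)) : Prop :=
  ∀ G' : SimpleGraph U, IsXTree X G' →
    ∀ ω ω' : Sym2 U → ℝ, IsProperWeighting G ω → IsProperWeighting G' ω' →
      LIso L G ω G' ω' → FixingIsometry X G G' ω ω'

/-- `G` displays the quartet `a a' ‖ b b'`: some edge lies on all four paths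
    joining `a` or `a'` to `b` or `b'`. -/
def DisplaysQ (G : SimpleGraph U) (a a' b b' : U) : Prop :=
  ∃ e : Sym2 U, e ∈ pathEdges G a b ∧ e ∈ pathEdges G a b' ∧
    e ∈ pathEdges G a' b ∧ e ∈ pathEdges G a' b'

def Distinct4 (a b c d : U) : Prop :=
  a ≠ b ∧ a ≠ c ∧ a ≠ d ∧ b ≠ c ∧ b ≠ d ∧ c ≠ d

/-- `a a' ‖ b b' ∈ Q(G)`: a quartet on four distinct elements of `X`
    displayed by `G`. -/
def QuartetOf (X : Set U) (G : SimpleGraph U) (a a' b b' : U) : Prop :=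
  a ∈ X ∧ a' ∈ X ∧ b ∈ X ∧ b' ∈ X ∧ Distinct4 a a' b b' ∧ DisplaysQ G a a' b b'

/-- `G` displays `a a' | b b'`: it displays neither `a b ‖ a' b'` nor
    `a b' ‖ a' b`. -/
def DisplaysBar (G : SimpleGraph U) (a a' b b' : U) : Prop :=
  ¬ DisplaysQ G a b a' b' ∧ ¬ DisplaysQ G a b' a' b

/-- `A, B` is a virtual `T`-split of `X`. -/
def VirtualSplit (X : Set U) (G : SimpleGraph U) (A B : Set U) : Prop :=
  A.Nonempty ∧ B.Nonempty ∧ Disjoint A B ∧ A ∪ B = X ∧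
    ∀ a ∈ A, ∀ a' ∈ A, ∀ b ∈ B, ∀ b' ∈ B, a ≠ a' → b ≠ b' → DisplaysBar G a a' b b'

/-- `G ≤ G'` (`G'` refines `G`), via the standard characterization
    `Q(T) ⊆ Q(T')` of refinement of `X`-trees. -/
def Refines (X : Set U) (G G' : SimpleGraph U) : Prop :=
  ∀ a a' b b' : U, QuartetOf X G a a' b b' → QuartetOf X G' a a' b b'

/-- `L` is a weak lasso for (coralls) the `X`-tree `G`. -/
def WeakLasso (X : Set U) (G : SimpleGraph U) (L : Set (Sym2 U)) : Prop :=
  ∀ G' : SimpleGraph U, IsXTree X G' →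
    ∀ ω ω' : Sym2 U → ℝ, IsProperWeighting G ω → IsProperWeighting G' ω' →
      LIso L G ω G' ω' → Refines X G G'

/-- The subgraph induced on a vertex set `A`. -/
def restrict {α : Type*} (Γ : SimpleGraph α) (A : Set α) : SimpleGraph α where
  Adj u v := Γ.Adj u v ∧ u ∈ A ∧ v ∈ A
  symm := ⟨by rintro u v ⟨h, hu, hv⟩; exact ⟨h.symm, hv, hu⟩⟩
  loopless := ⟨by rintro v ⟨h, _, _⟩; exact h.ne rfl⟩

/-- The restriction of `Γ` to `A` is a connected graph. -/
def ConnectedOn {α : Type*} (Γ : SimpleGraph α) (A : Set α) : Prop :=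
  ∀ x ∈ A, ∀ y ∈ A, (restrict Γ A).Reachable x y

/-- The connected component of `x` in `Γ` is bipartite. -/
def ComponentBipartite {α : Type*} (Γ : SimpleGraph α) (x : α) : Prop :=
  ∃ f : α → Bool, ∀ u v : α, Γ.Reachable x u → Γ.Adj u v → f u ≠ f v

/-- No connected component (of the graph with vertex set `S`) is bipartite. -/
def StronglyNonBipartite {α : Type*} (Γ : SimpleGraph α) (S : Set α) : Prop :=
  ∀ x ∈ S, ¬ ComponentBipartite Γ x

/-- The graph `Γ` is bipartite. -/
def Bipartite {α : Type*} (Γ : SimpleGraph α) : Prop :=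
  ∃ f : α → Bool, ∀ u v : α, Γ.Adj u v → f u ≠ f v

/-- `E_v`: the set of edges of `G` containing `v`. -/
def Ev (G : SimpleGraph U) (v : U) : Set (Sym2 U) := {e | e ∈ G.edgeSet ∧ v ∈ e}

/-- The graph `G(L,v)` on the edge set `E_v`: two distinct edges at `v` are
    adjacent if some cord of `L` has both on its path. -/
def covGraph (G : SimpleGraph U) (L : Set (Sym2 U)) (v : U) : SimpleGraph (Sym2 U) where
  Adj e e' := e ≠ e' ∧ e ∈ Ev G v ∧ e' ∈ Ev G v ∧
    ∃ x y : U, s(x, y) ∈ L ∧ e ∈ pathEdges G x y ∧ e' ∈ pathEdges G x y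
  symm := ⟨by
    rintro e e' ⟨hne, he, he', x, y, hc, hp, hp'⟩
    exact ⟨hne.symm, he', he, x, y, hc, hp', hp⟩⟩
  loopless := ⟨by rintro e ⟨hne, _⟩; exact hne rfl⟩

/-- `G(L,v)` is the complete graph on `E_v`. -/
def CompleteAt (G : SimpleGraph U) (L : Set (Sym2 U)) (v : U) : Prop :=
  ∀ e ∈ Ev G v, ∀ e' ∈ Ev G v, e ≠ e' → (covGraph G L v).Adj e e'

/-- `L` is a `t`-cover of `G`. -/
def TCover (X : Set U) (G : SimpleGraph U) (L : Set (Sym2 U)) : Prop :=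
  cup L = X ∧ ∀ v : U, Interior G v → CompleteAt G L v

/-- The graph `Γ(L, c)` for the cord `c = x x'`, with vertex set `X − {x,x'}`
    and edge set `L^(c)`. -/
def cordGraphC (X : Set U) (G : SimpleGraph U) (L : Set (Sym2 U)) (x x' : U) :
    SimpleGraph U where
  Adj y y' := y ≠ y' ∧ y ≠ x ∧ y ≠ x' ∧ y' ≠ x ∧ y' ≠ x' ∧
    s(y, y') ∈ L ∧ QuartetOf X G x x' y y' ∧
    ((s(x, y) ∈ L ∧ s(x', y') ∈ L) ∨ (s(x, y') ∈ L ∧ s(x', y) ∈ L))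
  symm := ⟨by
    rintro y y' ⟨hne, h1, h2, h3, h4, hL,
      ⟨hx1, hx2, hy1, hy2, ⟨d1, d2, d3, d4, d5, d6⟩, e, p1, p2, p3, p4⟩, hor⟩
    exact ⟨hne.symm, h3, h4, h1, h2, by rwa [Sym2.eq_swap],
      ⟨hx1, hx2, hy2, hy1, ⟨d1, d3, d2, d5, d4, d6.symm⟩, e, p2, p1, p4, p3⟩, hor.symm⟩⟩
  loopless := ⟨by rintro y ⟨hne, _⟩; exact hne rfl⟩

/-- `v` lies on the path of `G` from `x` to `y`. -/
def OnPath (G : SimpleGraph U) (x y v : U) : Prop :=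
  v = x ∨ v = y ∨ ∃ e ∈ pathEdges G x y, v ∈ e

/-- `v = med_G(a,b,c)`: `v` lies on all three pairwise paths. -/
def IsMedian (G : SimpleGraph U) (a b c v : U) : Prop :=
  OnPath G a b v ∧ OnPath G a c v ∧ OnPath G b c v

/-- `L` is a triplet cover of `G`. -/
def TripletCover (X : Set U) (G : SimpleGraph U) (L : Set (Sym2 U)) : Prop :=
  ∀ v : U, Interior G v → ∃ a b c : U, a ∈ X ∧ b ∈ X ∧ c ∈ X ∧
    a ≠ b ∧ a ≠ c ∧ b ≠ c ∧
    s(a, b) ∈ L ∧ s(a, c) ∈ L ∧ s(b, c) ∈ L ∧ IsMedian G a b c v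

/-- `L` is a pointed `x`-cover of `G`. -/
def PointedCover (X : Set U) (G : SimpleGraph U) (L : Set (Sym2 U)) (x : U) : Prop :=
  cup L = X ∧ (∀ v : U, Interior G v → CompleteAt G L v) ∧
    ∀ v : U, Interior G v → ∃ a b : U, a ≠ b ∧
      s(a, x) ∈ L ∧ s(b, x) ∈ L ∧ IsMedian G a b x v

/-- Every interior vertex has degree `3`. -/
def IsBinary (G : SimpleGraph U) : Prop := ∀ v : U, Interior G v → deg G v = 3

/-- `a, b` form a `T`-cherry with common neighbour `v`. -/
def IsCherry (G : SimpleGraph U) (a b v : U) : Prop :=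
  a ≠ b ∧ IsLeaf G a ∧ IsLeaf G b ∧ G.Adj a v ∧ G.Adj b v

/-- `a, b` form a proper `T`-cherry with common neighbour `v` of degree `3`. -/
def IsProperCherry (G : SimpleGraph U) (a b v : U) : Prop :=
  IsCherry G a b v ∧ deg G v = 3

/-- `W` is a `T`-core of `G`. -/
def IsCore (G : SimpleGraph U) (W : Set U) : Prop :=
  W.Nonempty ∧ W ⊆ G.support ∧
    (∀ a ∈ W, ∀ b ∈ W, (restrict G W).Reachable a b) ∧
    ∀ v ∈ W, deg (restrict G W) v = 1 ∨ deg (restrict G W) v = deg G v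

/-- `X_W`: the leaf set of the induced tree `T_W`. -/
def coreLeaves (G : SimpleGraph U) (W : Set U) : Set U :=
  {v | v ∈ W ∧ deg (restrict G W) v = 1}

/-- `g` is the gate of `x` in `W`: the vertex of `W` closest to `x`. -/
def IsGate (G : SimpleGraph U) (W : Set U) (x g : U) : Prop :=
  g ∈ W ∧ ∀ w ∈ W, OnPath G x w g

/-- `L_W`: the cords induced on the gates. -/
def gateCords (G : SimpleGraph U) (W : Set U) (L : Set (Sym2 U)) : Set (Sym2 U) :=
  {c | ∃ p q y y' : U, s(p, q) ∈ L ∧ IsGate G W p y ∧ IsGate G W q y' ∧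
       y ≠ y' ∧ c = s(y, y')}

/-- The gate map of the cherry reduction: `a, b ↦ v`, all else fixed. -/
def cherryMap (a b v : U) : U → U := fun p => if p = a ∨ p = b then v else p

/-- `L_U` for the cherry reduction at the proper cherry `a,b` with neighbour `v`. -/
def cherryLU (L : Set (Sym2 U)) (a b v : U) : Set (Sym2 U) :=
  {c | ∃ p q : U, s(p, q) ∈ L ∧ cherryMap a b v p ≠ cherryMap a b v q ∧
       c = s(cherryMap a b v p, cherryMap a b v q)}

/-- `X(a, L^{ab}) = {y : ay ∈ L − {ab}}`. -/
def sideSet (L : Set (Sym2 U)) (a b : U) : Set U :=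
  {y | s(a, y) ∈ L ∧ s(a, y) ≠ s(a, b)}

/-- `Σ_{c ∈ LU} ρ(c)·λ^{TU}_c = 0` as a linear form on `ℝ^{E_U}`. -/
def RhoAnnihilates (TU : SimpleGraph U) (LU : Set (Sym2 U)) (ρ : Sym2 U → ℝ) : Prop :=
  ∀ η : Sym2 U → ℝ, (∀ e, e ∉ TU.edgeSet → η e = 0) →
    ∑ᶠ c ∈ LU, ρ c * pdist TU η c = 0

/-- `D_ω(ab|cd)`. -/
def Dq (G : SimpleGraph U) (ω : Sym2 U → ℝ) (a b c d : U) : ℝ :=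
  max (tdist G ω a c + tdist G ω b d) (tdist G ω a d + tdist G ω b c)
    - tdist G ω a b - tdist G ω c d

/-- The star tree on `X` with central vertex `z`. -/
def starGraph (X : Set U) (z : U) : SimpleGraph U :=
  SimpleGraph.fromEdgeSet {c | ∃ x ∈ X, c = s(x, z)}

/-- `A ∨ B`: all cords with one end in `A` and the other in `B`. -/
def vee (A B : Set U) : Set (Sym2 U) := {c | ∃ a ∈ A, ∃ b ∈ B, c = s(a, b)}

/-- A `T`-shelling of `binom(X,2) − L` with cords `aᵢbᵢ` and pivots `pᵢ, qᵢ`. -/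
def IsShelling (X : Set U) (G : SimpleGraph U) (L : Set (Sym2 U)) (m : ℕ)
    (a b p q : Fin m → U) : Prop :=
  (∀ i, a i ∈ X ∧ b i ∈ X ∧ a i ≠ b i ∧ s(a i, b i) ∉ L) ∧
  Function.Injective (fun i => s(a i, b i)) ∧
  (∀ x y : U, x ∈ X → y ∈ X → x ≠ y → s(x, y) ∉ L → ∃ i, s(x, y) = s(a i, b i)) ∧
  ∀ i : Fin m,
    p i ∈ X ∧ q i ∈ X ∧ p i ≠ q i ∧
    p i ≠ a i ∧ p i ≠ b i ∧ q i ≠ a i ∧ q i ≠ b i ∧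
    DisplaysQ G (a i) (p i) (b i) (q i) ∧
    ∀ u w : U, u ∈ ({a i, b i, p i, q i} : Set U) → w ∈ ({a i, b i, p i, q i} : Set U) →
      u ≠ w → s(u, w) ≠ s(a i, b i) →
      (s(u, w) ∈ L ∨ ∃ j : Fin m, j < i ∧ s(u, w) = s(a j, b j))

/-- `L` is an `s`-lasso for `G`. -/
def SLasso (X : Set U) (G : SimpleGraph U) (L : Set (Sym2 U)) : Prop :=
  cup L = X ∧ ∃ (m : ℕ) (a b p q : Fin m → U), IsShelling X G L m a b p q

/-- `L'_{A,B}` of Corollary 3 (the cherry construction). -/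
def LAB (L' : Set (Sym2 U)) (X : Set U) (a b : U) (A B : Set U) : Set (Sym2 U) :=
  {c | c ∈ L' ∧ ∀ u ∈ c, u ∈ X ∧ u ≠ a ∧ u ≠ b} ∪
  {c | ∃ x ∈ A ∪ {b}, c = s(a, x)} ∪
  {c | ∃ x ∈ B, c = s(b, x)}

end Lasso
namespace Lasso
variable {U : Type}

/-! ### Generic finiteness and finsum lemmas -/

lemma pathEdges_subset {G : SimpleGraph U} {x y : U} :
    pathEdges G x y ⊆ G.edgeSet := fun _ he => he.1

lemma edgeSet_finite_of_support {G : SimpleGraph U} (h : G.support.Finite) :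
    G.edgeSet.Finite := by
  apply ((h.prod h).image (fun p : U × U => s(p.1, p.2))).subset
  intro e he
  induction e using Sym2.ind with
  | _ u w =>
    have hadj : G.Adj u w := he
    exact ⟨(u, w), ⟨⟨w, hadj⟩, ⟨u, hadj.symm⟩⟩, rfl⟩

lemma cordSet_finite {X : Set U} {L : Set (Sym2 U)} (hL : IsCordSet X L)
    (hX : X.Finite) : L.Finite := by
  apply ((hX.prod hX).image (fun p : U × U => s(p.1, p.2))).subset
  intro c hc
  induction c using Sym2.ind with
  | _ p q =>
    exact ⟨(p, q), ⟨(hL _ hc).2 p (Sym2.mem_mk_left p q),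
      (hL _ hc).2 q (Sym2.mem_mk_right p q)⟩, rfl⟩

lemma tdist_eq_sum {G : SimpleGraph U} {x y : U} (h : (pathEdges G x y).Finite)
    (ω : Sym2 U → ℝ) : tdist G ω x y = ∑ e ∈ h.toFinset, ω e :=
  finsum_mem_eq_finite_toFinset_sum _ h

lemma tdist_add_smul {G : SimpleGraph U} {x y : U} (h : (pathEdges G x y).Finite)
    (ω δ : Sym2 U → ℝ) (t : ℝ) :
    tdist G (fun e => ω e + t * δ e) x y = tdist G ω x y + t * tdist G δ x y := by
  rw [tdist_eq_sum h, tdist_eq_sum h, tdist_eq_sum h, Finset.mul_sum,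
    ← Finset.sum_add_distrib]

lemma tdist_sub {G : SimpleGraph U} {x y : U} (h : (pathEdges G x y).Finite)
    (ω ω' : Sym2 U → ℝ) :
    tdist G (fun e => ω e - ω' e) x y = tdist G ω x y - tdist G ω' x y := by
  rw [tdist_eq_sum h, tdist_eq_sum h, tdist_eq_sum h, ← Finset.sum_sub_distrib]

lemma tdist_congr {G : SimpleGraph U} {x y : U} {ω ω' : Sym2 U → ℝ}
    (h : ∀ e ∈ pathEdges G x y, ω e = ω' e) :
    tdist G ω x y = tdist G ω' x y :=
  finsum_mem_congr rfl h

/-- Sum of a one-point indicator over a finite set. -/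
lemma finsum_mem_ite_eq {s : Set (Sym2 U)} (hs : s.Finite) (e0 : Sym2 U) (r : ℝ) :
    (∑ᶠ e ∈ s, (if e = e0 then r else 0)) = if e0 ∈ s then r else 0 := by
  rw [finsum_mem_eq_finite_toFinset_sum _ hs, Finset.sum_ite_eq' hs.toFinset e0 (fun _ => r)]
  simp

lemma finsum_mem_mul_const {α : Type*} {s : Set α} (hs : s.Finite) (f : α → ℝ) (t : ℝ) :
    (∑ᶠ x ∈ s, f x * t) = (∑ᶠ x ∈ s, f x) * t := by
  rw [finsum_mem_eq_finite_toFinset_sum _ hs, finsum_mem_eq_finite_toFinset_sum _ hs,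
    Finset.sum_mul]

lemma finsum_mem_eq_sum_subtype {α : Type*} {s : Set α} (hs : s.Finite) (f : α → ℝ) :
    letI := hs.fintype
    (∑ᶠ x ∈ s, f x) = ∑ x : s, f ↑x := by
  letI := hs.fintype
  rw [finsum_mem_eq_toFinset_sum]
  exact Finset.sum_subtype _ (fun x => Set.mem_toFinset) f

/-! ### Path lemmas -/

lemma pathEdges_comm {G : SimpleGraph U} (x y : U) :
    pathEdges G x y = pathEdges G y x := by
  ext e
  constructor <;>
  · rintro ⟨he, h⟩
    refine ⟨he, fun p => ?_⟩
    have := h p.reverse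
    rwa [SimpleGraph.Walk.edges_reverse, List.mem_reverse] at this

lemma tdist_comm {G : SimpleGraph U} (ω : Sym2 U → ℝ) (x y : U) :
    tdist G ω x y = tdist G ω y x := by
  rw [tdist, tdist, pathEdges_comm]

lemma pairPathEdges_eq {G : SimpleGraph U} (x y : U) :
    pairPathEdges G s(x, y) = pathEdges G x y := by
  ext e
  constructor
  · rintro ⟨he, h⟩
    exact ⟨he, fun p => h x y rfl p⟩
  · rintro ⟨he, h⟩
    refine ⟨he, fun x' y' hc p => ?_⟩
    rcases Sym2.eq_iff.mp hc with ⟨hx, hy⟩ | ⟨hx, hy⟩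
    · subst hx; subst hy; exact h p
    · subst hx; subst hy
      have := h p.reverse
      rwa [SimpleGraph.Walk.edges_reverse, List.mem_reverse] at this

lemma pdist_eq_tdist {G : SimpleGraph U} (ω : Sym2 U → ℝ) (x y : U) :
    pdist G ω s(x, y) = tdist G ω x y := by
  rw [pdist, tdist, pairPathEdges_eq]

/-- In an acyclic graph, the separating edges between `x` and `y` are exactly the
edges of any path from `x` to `y`. -/
lemma pathEdges_eq_of_isPath {G : SimpleGraph U} (hG : G.IsAcyclic) {x y : U}
    (p : G.Walk x y) (hp : p.IsPath) :
    pathEdges G x y = {e | e ∈ p.edges} := by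
  ext e
  constructor
  · rintro ⟨_, h⟩
    exact h p
  · intro he
    refine ⟨p.edges_subset_edgeSet he, fun q => ?_⟩
    have huniq := SimpleGraph.isAcyclic_iff_path_unique.mp hG
      ⟨p, hp⟩ ⟨q.bypass, q.bypass_isPath⟩
    have hpe : p.edges = q.bypass.edges :=
      congrArg (fun r : G.Path x y => r.1.edges) huniq
    exact q.edges_bypass_subset (hpe ▸ he)

/-- First edge out of a degree-one vertex lies on every walk leaving it. -/
lemma firstEdge_mem_pathEdges {G : SimpleGraph U} {x z y : U}
    (hnb : G.neighborSet x = {z}) (hxy : x ≠ y) :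
    s(x, z) ∈ pathEdges G x y := by
  have hadj : G.Adj x z := by
    have : z ∈ G.neighborSet x := by rw [hnb]; rfl
    exact this
  refine ⟨hadj, fun p => ?_⟩
  cases p with
  | nil => exact absurd rfl hxy
  | @cons _ u _ h q =>
    have hu : u ∈ G.neighborSet x := h
    rw [hnb, Set.mem_singleton_iff] at hu
    subst hu
    simp [SimpleGraph.Walk.edges_cons]

/-- A degree-one vertex is not on a path between two other vertices. -/
lemma leaf_not_mem_support {G : SimpleGraph U} {z z' : U}
    (hnb : G.neighborSet z = {z'}) :
    ∀ {x y : U} (p : G.Walk x y), p.IsPath → x ≠ z → y ≠ z → z ∉ p.support := by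
  intro x y p
  induction p with
  | nil =>
    intro _ hx _
    simp only [SimpleGraph.Walk.support_nil, List.mem_singleton]
    exact fun h => hx h.symm
  | @cons x' u y' h q ih =>
    intro hp hx hy
    have hq : q.IsPath := hp.of_cons
    by_cases hu : u = z
    · subst hu
      exfalso
      -- x' is adjacent to z, so x' = z'
      have hx' : x' ∈ G.neighborSet u := h.symm
      rw [hnb, Set.mem_singleton_iff] at hx'
      subst hx'
      cases q with
      | nil => exact hy rfl
      | @cons _ u2 _ h2 q2 =>
        have hu2 : u2 ∈ G.neighborSet u := h2
        rw [hnb, Set.mem_singleton_iff] at hu2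
        subst hu2
        rw [SimpleGraph.Walk.cons_isPath_iff] at hp
        exact hp.2 (by simp [SimpleGraph.Walk.support_cons])
    · have hz : z ∉ q.support := ih hq hu hy
      simp only [SimpleGraph.Walk.support_cons, List.mem_cons]
      rintro (rfl | hmem)
      · exact hx rfl
      · exact hz hmem

/-- Edges of a walk staying inside `S` are edges of the restriction. -/
lemma walk_edges_mem_restrict {G : SimpleGraph U} {S : Set U} {x y : U}
    (q : G.Walk x y) (hsup : ∀ u ∈ q.support, u ∈ S) :
    ∀ e ∈ q.edges, e ∈ (restrict G S).edgeSet := by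
  intro e he
  induction e using Sym2.ind with
  | _ u w =>
    have hadj : G.Adj u w := q.edges_subset_edgeSet he
    exact ⟨hadj, hsup u (q.fst_mem_support_of_mem_edges he),
      hsup w (q.snd_mem_support_of_mem_edges he)⟩

lemma restrict_edgeSet_subset {G : SimpleGraph U} {S : Set U} :
    (restrict G S).edgeSet ⊆ G.edgeSet := by
  intro e he
  induction e using Sym2.ind with
  | _ u w => exact he.1

lemma restrict_acyclic {G : SimpleGraph U} (hG : G.IsAcyclic) (S : Set U) :
    (restrict G S).IsAcyclic := by
  intro u c hc
  have h : ∀ e ∈ c.edges, e ∈ G.edgeSet := fun e he =>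
    restrict_edgeSet_subset (c.edges_subset_edgeSet he)
  exact hG (c.transfer G h) (hc.transfer h)

lemma exists_path_of_reachable {G : SimpleGraph U} {x y : U} (h : G.Reachable x y) :
    ∃ p : G.Walk x y, p.IsPath := by
  obtain ⟨p⟩ := h
  exact ⟨p.bypass, p.bypass_isPath⟩

/-! ### Kernel characterization of edge-weight lassos -/

/-- Kernel-triviality of the cord functionals. -/
def KerTrivial (G : SimpleGraph U) (L : Set (Sym2 U)) : Prop :=
  ∀ δ : Sym2 U → ℝ, (∀ e, e ∉ G.edgeSet → δ e = 0) →
    (∀ x y : U, s(x, y) ∈ L → tdist G δ x y = 0) → δ = 0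

lemma edgeWeightLasso_iff_ker {G : SimpleGraph U} (hfin : G.edgeSet.Finite)
    (L : Set (Sym2 U)) : EdgeWeightLasso G L ↔ KerTrivial G L := by
  have hpfin : ∀ x y : U, (pathEdges G x y).Finite := fun x y =>
    hfin.subset pathEdges_subset
  constructor
  · -- lasso implies kernel trivial
    intro hlasso δ hoff hker
    set ω₁ : Sym2 U → ℝ := fun e => if e ∈ G.edgeSet then 1 else 0 with hω₁
    set M : ℝ := ∑ e ∈ hfin.toFinset, |δ e| with hM
    have hM0 : 0 ≤ M := Finset.sum_nonneg fun _ _ => abs_nonneg _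
    have hMb : ∀ e ∈ G.edgeSet, |δ e| ≤ M := by
      intro e he
      exact Finset.single_le_sum (fun i _ => abs_nonneg (δ i))
        (hfin.mem_toFinset.mpr he)
    set ε : ℝ := (M + 1)⁻¹ with hε
    have hε0 : 0 < ε := inv_pos.mpr (by linarith)
    set ω₂ : Sym2 U → ℝ := fun e => ω₁ e + ε * δ e with hω₂
    have hωP : IsProperWeighting G ω₁ := by
      refine ⟨⟨fun e => ?_, fun e he => ?_⟩, fun e he _ => ?_⟩
      · by_cases h : e ∈ G.edgeSet <;> simp [hω₁, h]
      · simp [hω₁, he]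
      · simp [hω₁, he]
    have hpos : ∀ e ∈ G.edgeSet, 0 < ω₂ e := by
      intro e he
      have h1 : |ε * δ e| ≤ M / (M + 1) := by
        rw [abs_mul, abs_of_pos hε0]
        rw [hε, inv_mul_eq_div, div_le_div_iff₀ (by linarith) (by linarith)]
        nlinarith [hMb e he]
      have h2 : M / (M + 1) < 1 := by
        rw [div_lt_one (by linarith)]; linarith
      have := abs_le.mp h1
      simp only [hω₂, hω₁, if_pos he]
      linarith [this.1]
    have hω₂P : IsProperWeighting G ω₂ := by
      refine ⟨⟨fun e => ?_, fun e he => ?_⟩, fun e he _ => (hpos e he)⟩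
      · by_cases h : e ∈ G.edgeSet
        · exact le_of_lt (hpos e h)
        · simp [hω₂, hω₁, h, hoff e h]
      · simp [hω₂, hω₁, he, hoff e he]
    have hiso : LIso L G ω₁ G ω₂ := by
      intro x y hxy
      have : tdist G ω₂ x y = tdist G ω₁ x y + ε * tdist G δ x y :=
        tdist_add_smul (hpfin x y) ω₁ δ ε
      rw [this, hker x y hxy, mul_zero, add_zero]
    have := hlasso ω₁ ω₂ hωP hω₂P hiso
    funext e
    have he := congrFun this e
    simp only [hω₂, hω₁] at he
    have : ε * δ e = 0 := by linarith
    rcases mul_eq_zero.mp this with h | h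
    · exact absurd h (ne_of_gt hε0)
    · exact h
  · -- kernel trivial implies lasso
    intro hker ω ω' hw hw' hiso
    have h0 : (fun e => ω e - ω' e) = 0 := by
      refine hker _ (fun e he => by rw [hw.zero_off e he, hw'.zero_off e he, sub_self])
        (fun x y hxy => ?_)
      rw [tdist_sub (hpfin x y), hiso x y hxy, sub_self]
    funext e
    have := congrFun h0 e
    simp only [Pi.zero_apply] at this
    linarith
/-! ### The cherry context -/

/-- All the structural facts about a proper cherry that we need. -/
structure Ctx (X : Set U) (G : SimpleGraph U) (a b v w : U) : Prop where
  hGfin : G.edgeSet.Finite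
  hacyc : G.IsAcyclic
  hconn : ∀ x ∈ G.support, ∀ y ∈ G.support, G.Reachable x y
  hXsupp : ∀ x ∈ X, x ∈ G.support
  hXleaf : ∀ x ∈ X, ∃ z, G.neighborSet x = {z}
  hna : G.neighborSet a = {v}
  hnb : G.neighborSet b = {v}
  hnv : G.neighborSet v = {a, b, w}
  haX : a ∈ X
  hbX : b ∈ X
  hvX : v ∉ X
  hab : a ≠ b
  hav : a ≠ v
  hbv : b ≠ v
  hwv : w ≠ v
  hwa : w ≠ a
  hwb : w ≠ b

variable {X : Set U} {G : SimpleGraph U} {a b v w : U}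

lemma ctx_of (hT : IsXTree X G) (hch : IsProperCherry G a b v) :
    ∃ w, Ctx X G a b v w := by
  obtain ⟨⟨hab, hla, hlb, hadja, hadjb⟩, hdegv⟩ := hch
  have hXleaf : ∀ x ∈ X, ∃ z, G.neighborSet x = {z} := by
    intro x hx
    have : IsLeaf G x := by rw [hT.leaves_eq] at hx; exact hx
    exact Set.ncard_eq_one.mp this
  have hna : G.neighborSet a = {v} := by
    obtain ⟨z, hz⟩ := Set.ncard_eq_one.mp hla
    have : v ∈ G.neighborSet a := hadja
    rw [hz, Set.mem_singleton_iff] at this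
    rw [hz, this]
  have hnb : G.neighborSet b = {v} := by
    obtain ⟨z, hz⟩ := Set.ncard_eq_one.mp hlb
    have : v ∈ G.neighborSet b := hadjb
    rw [hz, Set.mem_singleton_iff] at this
    rw [hz, this]
  obtain ⟨x, y, z, hxy, hxz, hyz, hv3⟩ := Set.ncard_eq_three.mp hdegv
  have hamem : a ∈ ({x, y, z} : Set U) := by rw [← hv3]; exact hadja.symm
  have hbmem : b ∈ ({x, y, z} : Set U) := by rw [← hv3]; exact hadjb.symm
  -- find the third element
  have key : ∃ w, w ≠ a ∧ w ≠ b ∧ G.neighborSet v = {a, b, w} := by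
    simp only [Set.mem_insert_iff, Set.mem_singleton_iff] at hamem hbmem
    rcases hamem with rfl | rfl | rfl <;> rcases hbmem with rfl | rfl | rfl
    · exact absurd rfl hab
    · exact ⟨z, hxz.symm, hyz.symm, by rw [hv3]⟩
    · exact ⟨y, hxy.symm, hyz, by rw [hv3]; ext u; simp; tauto⟩
    · exact ⟨z, hyz.symm, hxz.symm, by rw [hv3]; ext u; simp; tauto⟩
    · exact absurd rfl hab
    · exact ⟨x, hxy, hxz, by rw [hv3]; ext u; simp; tauto⟩
    · exact ⟨y, hyz, hxy.symm, by rw [hv3]; ext u; simp; tauto⟩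
    · exact ⟨x, hxz, hxy, by rw [hv3]; ext u; simp; tauto⟩
    · exact absurd rfl hab
  obtain ⟨w, hwa, hwb, hnv⟩ := key
  have hvX : v ∉ X := by
    intro hv
    rw [hT.leaves_eq] at hv
    have : deg G v = 1 := hv
    rw [hdegv] at this; exact absurd this (by norm_num)
  have haX : a ∈ X := by rw [hT.leaves_eq]; exact hla
  have hbX : b ∈ X := by rw [hT.leaves_eq]; exact hlb
  have hwv : w ≠ v := by
    intro h
    have : w ∈ G.neighborSet v := by rw [hnv]; simp
    rw [h] at this
    exact G.loopless.irrefl v this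
  exact ⟨w, ⟨edgeSet_finite_of_support hT.support_finite, hT.acyclic, hT.connected,
    fun x hx => by
      obtain ⟨z, hz⟩ := hXleaf x hx
      have hz' : z ∈ G.neighborSet x := by rw [hz]; rfl
      exact ⟨z, hz'⟩,
    hXleaf, hna, hnb, hnv, haX, hbX, hvX, hab, hadja.ne, hadjb.ne, hwv, hwa, hwb⟩⟩

namespace Ctx

variable (hc : Ctx X G a b v w)
include hc

lemma hadjav : G.Adj a v := by
  have : v ∈ G.neighborSet a := by rw [hc.hna]; rfl
  exact this

lemma hadjbv : G.Adj b v := by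
  have : v ∈ G.neighborSet b := by rw [hc.hnb]; rfl
  exact this

lemma hadjvw : G.Adj v w := by
  have : w ∈ G.neighborSet v := by rw [hc.hnv]; simp
  exact this

omit hc in
lemma haS : a ∉ G.support \ {a, b} := by simp
omit hc in
lemma hbS : b ∉ G.support \ {a, b} := by simp

lemma hvS : v ∈ G.support \ {a, b} :=
  ⟨⟨a, hc.hadjav.symm⟩, by simp [hc.hav.symm, hc.hbv.symm]⟩

lemma hwS : w ∈ G.support \ {a, b} :=
  ⟨⟨v, (hc.hadjvw).symm⟩, by simp [hc.hwa, hc.hwb]⟩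

lemma hxS {x : U} (hx : x ∈ X) (hxa : x ≠ a) (hxb : x ≠ b) :
    x ∈ G.support \ {a, b} := ⟨hc.hXsupp x hx, by simp [hxa, hxb]⟩

lemma hxa_of_X {x : U} (hx : x ∈ X) : x ≠ v := fun h => hc.hvX (h ▸ hx)

end Ctx
/-! ### Structure of the reduced tree -/

lemma support_subset_support {G : SimpleGraph U} {x y : U} (p : G.Walk x y)
    (hxs : x ∈ G.support) : ∀ u ∈ p.support, u ∈ G.support := by
  induction p with
  | nil => intro u hu; simp only [SimpleGraph.Walk.support_nil, List.mem_singleton] at hu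
           exact hu ▸ hxs
  | @cons x' u' y' h q ih =>
    intro u hu
    simp only [SimpleGraph.Walk.support_cons, List.mem_cons] at hu
    rcases hu with rfl | hu
    · exact hxs
    · exact ih ⟨x', h.symm⟩ u hu

namespace Ctx

variable (hc : Ctx X G a b v w)
include hc

lemma TU_edgeSet :
    (restrict G (G.support \ {a, b})).edgeSet = G.edgeSet \ {s(a, v), s(b, v)} := by
  ext e
  induction e using Sym2.ind with
  | _ u z =>
    constructor
    · rintro ⟨hadj, hu, hz⟩
      refine ⟨hadj, ?_⟩
      intro hmem
      simp only [Set.mem_insert_iff, Set.mem_singleton_iff] at hmem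
      rcases hmem with h | h <;> rcases Sym2.eq_iff.mp h with ⟨h1, h2⟩ | ⟨h1, h2⟩
      · exact hu.2 (by rw [h1]; exact Set.mem_insert _ _)
      · exact hz.2 (by rw [h2]; exact Set.mem_insert _ _)
      · exact hu.2 (by rw [h1]; exact Set.mem_insert_of_mem _ rfl)
      · exact hz.2 (by rw [h2]; exact Set.mem_insert_of_mem _ rfl)
    · rintro ⟨hadj, hne⟩
      simp only [Set.mem_insert_iff, Set.mem_singleton_iff] at hne
      push_neg at hne
      have husupp : u ∈ G.support := ⟨z, hadj⟩
      have hzsupp : z ∈ G.support := ⟨u, hadj.symm⟩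
      have hua : u ≠ a := by
        rintro rfl
        have : z ∈ G.neighborSet u := hadj
        rw [hc.hna, Set.mem_singleton_iff] at this
        exact hne.1 (by rw [this])
      have hub : u ≠ b := by
        rintro rfl
        have : z ∈ G.neighborSet u := hadj
        rw [hc.hnb, Set.mem_singleton_iff] at this
        exact hne.2 (by rw [this])
      have hza : z ≠ a := by
        rintro rfl
        have : u ∈ G.neighborSet z := hadj.symm
        rw [hc.hna, Set.mem_singleton_iff] at this
        exact hne.1 (by rw [this, Sym2.eq_swap])
      have hzb : z ≠ b := by
        rintro rfl
        have : u ∈ G.neighborSet z := hadj.symm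
        rw [hc.hnb, Set.mem_singleton_iff] at this
        exact hne.2 (by rw [this, Sym2.eq_swap])
      exact ⟨hadj, ⟨husupp, by simp [hua, hub]⟩, ⟨hzsupp, by simp [hza, hzb]⟩⟩

lemma ea_mem : s(a, v) ∈ G.edgeSet := hc.hadjav
lemma eb_mem : s(b, v) ∈ G.edgeSet := hc.hadjbv

lemma ea_ne_eb : s(a, v) ≠ s(b, v) := by
  intro h
  rcases Sym2.eq_iff.mp h with ⟨h1, _⟩ | ⟨h1, _⟩
  · exact hc.hab h1
  · exact hc.hav h1

lemma ea_not_mem_TU : s(a, v) ∉ (restrict G (G.support \ {a, b})).edgeSet := by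
  rw [hc.TU_edgeSet]; simp

lemma eb_not_mem_TU : s(b, v) ∉ (restrict G (G.support \ {a, b})).edgeSet := by
  rw [hc.TU_edgeSet]; simp

lemma TU_fin : (restrict G (G.support \ {a, b})).edgeSet.Finite :=
  hc.hGfin.subset restrict_edgeSet_subset

lemma card_edges : G.edgeSet.ncard =
    (restrict G (G.support \ {a, b})).edgeSet.ncard + 2 := by
  rw [hc.TU_edgeSet]
  have hsub : ({s(a, v), s(b, v)} : Set (Sym2 U)) ⊆ G.edgeSet := by
    intro e he
    rcases he with rfl | he
    · exact hc.ea_mem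
    · rw [Set.mem_singleton_iff] at he; exact he ▸ hc.eb_mem
  have := Set.ncard_diff_add_ncard_of_subset hsub hc.hGfin
  rw [Set.ncard_pair hc.ea_ne_eb] at this
  omega

lemma TU_acyclic : (restrict G (G.support \ {a, b})).IsAcyclic :=
  restrict_acyclic hc.hacyc _

lemma ev_mem : s(v, w) ∈ (restrict G (G.support \ {a, b})).edgeSet :=
  ⟨hc.hadjvw, hc.hvS, hc.hwS⟩

lemma TU_nv : (restrict G (G.support \ {a, b})).neighborSet v = {w} := by
  ext z
  constructor
  · rintro ⟨hadj, _, hz⟩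
    have : z ∈ G.neighborSet v := hadj
    rw [hc.hnv] at this
    rcases this with h | h | h
    · exact absurd (by rw [h]; exact Set.mem_insert _ _) hz.2
    · exact absurd (by rw [h]; exact Set.mem_insert_of_mem _ rfl) hz.2
    · exact h
  · rintro rfl
    exact ⟨hc.hadjvw, hc.hvS, hc.hwS⟩

/-- The path from `a` to a leaf `x ∉ {a,b}` is the pendant edge plus the
reduced path from `v` to `x`. -/
lemma pathEdges_from_cherry {x c' : U} (hcx : c' = a ∨ c' = b) (hx : x ∈ X)
    (hxa : x ≠ a) (hxb : x ≠ b) :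
    pathEdges G c' x =
      insert s(c', v) (pathEdges (restrict G (G.support \ {a, b})) v x) := by
  have hnc : G.neighborSet c' = {v} := by rcases hcx with rfl | rfl
                                          exacts [hc.hna, hc.hnb]
  have hcX : c' ∈ X := by rcases hcx with rfl | rfl; exacts [hc.haX, hc.hbX]
  have hxc : x ≠ c' := by rcases hcx with rfl | rfl; exacts [hxa, hxb]
  obtain ⟨p, hp⟩ := exists_path_of_reachable
    (hc.hconn c' (hc.hXsupp c' hcX) x (hc.hXsupp x hx))
  cases p with
  | nil => exact absurd rfl hxc.symm
  | @cons _ u _ h q =>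
    have hu : u ∈ G.neighborSet c' := h
    rw [hnc, Set.mem_singleton_iff] at hu
    have hu' : v = u := hu.symm
    subst hu'
    rw [SimpleGraph.Walk.cons_isPath_iff] at hp
    obtain ⟨hq, hcq⟩ := hp
    have haq : a ∉ q.support := by
      rcases hcx with rfl | rfl
      · exact hcq
      · exact leaf_not_mem_support hc.hna q hq (hc.hav.symm) hxa
    have hbq : b ∉ q.support := by
      rcases hcx with rfl | rfl
      · exact leaf_not_mem_support hc.hnb q hq (hc.hbv.symm) hxb
      · exact hcq
    have hsup : ∀ u ∈ q.support, u ∈ G.support \ {a, b} := by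
      intro u hu
      refine ⟨support_subset_support q ⟨a, hc.hadjav.symm⟩ u hu, ?_⟩
      simp only [Set.mem_insert_iff, Set.mem_singleton_iff]
      push_neg
      exact ⟨fun h' => haq (h' ▸ hu), fun h' => hbq (h' ▸ hu)⟩
    have hedges := walk_edges_mem_restrict q hsup
    have hqU := hq.transfer hedges
    have hp' : (SimpleGraph.Walk.cons h q).IsPath := by
      rw [SimpleGraph.Walk.cons_isPath_iff]; exact ⟨hq, hcq⟩
    rw [pathEdges_eq_of_isPath hc.hacyc (SimpleGraph.Walk.cons h q) hp',
      pathEdges_eq_of_isPath hc.TU_acyclic _ hqU]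
    ext e
    simp [SimpleGraph.Walk.edges_cons, SimpleGraph.Walk.edges_transfer]

lemma pathEdges_ab : pathEdges G a b = {s(a, v), s(b, v)} := by
  have hpath : (SimpleGraph.Walk.cons hc.hadjav
      (SimpleGraph.Walk.cons hc.hadjbv.symm SimpleGraph.Walk.nil)).IsPath := by
    rw [SimpleGraph.Walk.isPath_def]
    simp [hc.hav, hc.hab, Ne.symm hc.hbv]
  rw [pathEdges_eq_of_isPath hc.hacyc _ hpath]
  ext e
  simp only [SimpleGraph.Walk.edges_cons, SimpleGraph.Walk.edges_nil,
    List.mem_cons, List.not_mem_nil, or_false, Set.mem_setOf_eq,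
    Set.mem_insert_iff, Set.mem_singleton_iff]
  rw [Sym2.eq_swap (a := v) (b := b)]

/-- Paths between leaves distinct from `a, b` avoid the cherry. -/
lemma pathEdges_inner {x y : U} (hx : x ∈ X) (hxa : x ≠ a) (hxb : x ≠ b)
    (hy : y ∈ X) (hya : y ≠ a) (hyb : y ≠ b) :
    pathEdges G x y = pathEdges (restrict G (G.support \ {a, b})) x y := by
  obtain ⟨p, hp⟩ := exists_path_of_reachable
    (hc.hconn x (hc.hXsupp x hx) y (hc.hXsupp y hy))
  have haq : a ∉ p.support := leaf_not_mem_support hc.hna p hp hxa hya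
  have hbq : b ∉ p.support := leaf_not_mem_support hc.hnb p hp hxb hyb
  have hsup : ∀ u ∈ p.support, u ∈ G.support \ {a, b} := by
    intro u hu
    refine ⟨support_subset_support p (hc.hXsupp x hx) u hu, ?_⟩
    simp only [Set.mem_insert_iff, Set.mem_singleton_iff]
    push_neg
    exact ⟨fun h' => haq (h' ▸ hu), fun h' => hbq (h' ▸ hu)⟩
  have hedges := walk_edges_mem_restrict p hsup
  have hpU := hp.transfer hedges
  rw [pathEdges_eq_of_isPath hc.hacyc _ hp, pathEdges_eq_of_isPath hc.TU_acyclic _ hpU]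
  ext e
  simp [SimpleGraph.Walk.edges_transfer]

lemma ev_mem_path_v {x : U} (hx : x ∈ X) (hxa : x ≠ a) (hxb : x ≠ b) :
    s(v, w) ∈ pathEdges (restrict G (G.support \ {a, b})) v x :=
  firstEdge_mem_pathEdges hc.TU_nv (hc.hxa_of_X hx).symm

lemma ev_not_mem_path_inner {x y : U} (hx : x ∈ X) (hxa : x ≠ a) (hxb : x ≠ b)
    (hy : y ∈ X) (hya : y ≠ a) (hyb : y ≠ b) :
    s(v, w) ∉ pathEdges (restrict G (G.support \ {a, b})) x y := by
  obtain ⟨p, hp⟩ := exists_path_of_reachable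
    (hc.hconn x (hc.hXsupp x hx) y (hc.hXsupp y hy))
  have haq : a ∉ p.support := leaf_not_mem_support hc.hna p hp hxa hya
  have hbq : b ∉ p.support := leaf_not_mem_support hc.hnb p hp hxb hyb
  have hsup : ∀ u ∈ p.support, u ∈ G.support \ {a, b} := by
    intro u hu
    refine ⟨support_subset_support p (hc.hXsupp x hx) u hu, ?_⟩
    simp only [Set.mem_insert_iff, Set.mem_singleton_iff]
    push_neg
    exact ⟨fun h' => haq (h' ▸ hu), fun h' => hbq (h' ▸ hu)⟩
  have hedges := walk_edges_mem_restrict p hsup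
  have hpU := hp.transfer hedges
  rw [pathEdges_eq_of_isPath hc.TU_acyclic _ hpU]
  intro hmem
  simp only [Set.mem_setOf_eq] at hmem
  have hvsup : v ∈ (p.transfer _ hedges).support :=
    SimpleGraph.Walk.fst_mem_support_of_mem_edges _ hmem
  have hvp : v ∉ (p.transfer _ hedges).support :=
    leaf_not_mem_support hc.TU_nv _ hpU (hc.hxa_of_X hx) (hc.hxa_of_X hy)
  exact hvp hvsup

end Ctx
/-! ### Combinatorics of the reduced cord set -/

lemma sym2_left_inj (z : U) : Function.Injective (fun x : U => s(z, x)) := by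
  intro x y h
  rcases Sym2.eq_iff.mp h with ⟨_, h2⟩ | ⟨h1, h2⟩
  · exact h2
  · exact h2.trans h1

/-- Cords of `L` avoiding both `a` and `b`. -/
def innerCords (L : Set (Sym2 U)) (a b : U) : Set (Sym2 U) :=
  {c | c ∈ L ∧ a ∉ c ∧ b ∉ c}

section Cords

variable {X : Set U} {L : Set (Sym2 U)} {a b v : U}
variable (hL : IsCordSet X L) (haX : a ∈ X) (hbX : b ∈ X) (hvX : v ∉ X) (hab : a ≠ b)

lemma mem_sideA (hL : IsCordSet X L) {x : U} (hx : x ∈ sideSet L a b) :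
    x ∈ X ∧ x ≠ a ∧ s(a, x) ∈ L := by
  obtain ⟨hmem, _⟩ := hx
  refine ⟨(hL _ hmem).2 x (Sym2.mem_mk_right a x), fun h => ?_, hmem⟩
  exact (hL _ hmem).1 (by rw [h]; exact Sym2.mk_isDiag_iff.mpr rfl)

include hab in
lemma sideSet_eq : sideSet L a b = {x | s(a, x) ∈ L ∧ x ≠ b} := by
  ext y
  constructor
  · rintro ⟨h1, h2⟩
    exact ⟨h1, fun h => h2 (by rw [h])⟩
  · rintro ⟨h1, h2⟩
    refine ⟨h1, fun h => ?_⟩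
    rcases Sym2.eq_iff.mp h with ⟨_, h4⟩ | ⟨h3, _⟩
    · exact h2 h4
    · exact hab h3

lemma sideA_not_b {x : U} (hx : x ∈ sideSet L a b) : x ≠ b := by
  intro h
  exact hx.2 (by rw [h])

include hL hvX hab in
lemma L_decomp (habL : s(a, b) ∈ L) :
    L = insert s(a, b) (innerCords L a b ∪
      (fun x => s(a, x)) '' sideSet L a b ∪ (fun x => s(b, x)) '' sideSet L b a) := by
  ext c
  constructor
  · intro hc
    induction c using Sym2.ind with
    | _ p q =>
      have hnd := (hL _ hc).1
      have hpq : p ≠ q := fun h => hnd (Sym2.mk_isDiag_iff.mpr h)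
      by_cases hpa : p = a
      · subst hpa
        by_cases hqb : q = b
        · subst hqb; exact Set.mem_insert _ _
        · refine Set.mem_insert_of_mem _ (Or.inl (Or.inr ⟨q, ⟨hc, fun h => ?_⟩, rfl⟩))
          rcases Sym2.eq_iff.mp h with ⟨_, h4⟩ | ⟨h3, _⟩
          · exact hqb h4
          · exact hab h3
      · by_cases hpb : p = b
        · subst hpb
          by_cases hqa : q = a
          · subst hqa
            rw [Sym2.eq_swap]
            exact Set.mem_insert _ _
          · refine Set.mem_insert_of_mem _ (Or.inr ⟨q, ⟨hc, fun h => ?_⟩, rfl⟩)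
            rcases Sym2.eq_iff.mp h with ⟨_, h4⟩ | ⟨h3, _⟩
            · exact hqa h4
            · exact (Ne.symm hab) h3
        · by_cases hqa : q = a
          · subst hqa
            refine Set.mem_insert_of_mem _ (Or.inl (Or.inr ⟨p, ⟨?_, fun h => ?_⟩, Sym2.eq_swap⟩))
            · rwa [Sym2.eq_swap] at hc
            · rcases Sym2.eq_iff.mp h with ⟨_, h4⟩ | ⟨h3, _⟩
              · exact hpb h4
              · exact hab h3
          · by_cases hqb : q = b
            · subst hqb
              refine Set.mem_insert_of_mem _ (Or.inr ⟨p, ⟨?_, fun h => ?_⟩, Sym2.eq_swap⟩)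
              · rwa [Sym2.eq_swap] at hc
              · rcases Sym2.eq_iff.mp h with ⟨_, h4⟩ | ⟨h3, _⟩
                · exact hpa h4
                · exact (Ne.symm hab) h3
            · refine Set.mem_insert_of_mem _ (Or.inl (Or.inl ⟨hc, ?_, ?_⟩))
              · intro hmem
                rcases Sym2.mem_iff.mp hmem with h | h
                · exact hpa h.symm
                · exact hqa h.symm
              · intro hmem
                rcases Sym2.mem_iff.mp hmem with h | h
                · exact hpb h.symm
                · exact hqb h.symm
  · intro hc
    rcases hc with rfl | hc
    · exact habL
    rcases hc with (hc | ⟨x, hx, rfl⟩) | ⟨x, hx, rfl⟩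
    · exact hc.1
    · exact hx.1
    · exact hx.1

include hL hvX hab in
lemma LU_eq : cherryLU L a b v =
    (fun x => s(v, x)) '' (sideSet L a b ∪ sideSet L b a) ∪ innerCords L a b := by
  have hcmab : ∀ p : U, (p = a ∨ p = b) → cherryMap a b v p = v := by
    intro p hp; simp [cherryMap, hp]
  have hcmo : ∀ p : U, p ≠ a → p ≠ b → cherryMap a b v p = p := by
    intro p h1 h2; simp [cherryMap, h1, h2]
  ext c
  constructor
  · rintro ⟨p, q, hpq, hne, rfl⟩
    have hpX : p ∈ X := (hL _ hpq).2 p (Sym2.mem_mk_left p q)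
    have hqX : q ∈ X := (hL _ hpq).2 q (Sym2.mem_mk_right p q)
    have hnd := (hL _ hpq).1
    have hpqne : p ≠ q := fun h => hnd (Sym2.mk_isDiag_iff.mpr h)
    by_cases hpab : p = a ∨ p = b
    · by_cases hqab : q = a ∨ q = b
      · exact absurd (by rw [hcmab p hpab, hcmab q hqab]) hne
      · push_neg at hqab
        rw [hcmab p hpab, hcmo q hqab.1 hqab.2]
        rcases hpab with h | h
        · have hm : s(a, q) ∈ L := by rw [← h]; exact hpq
          exact Or.inl ⟨q, Or.inl (by rw [sideSet_eq hab]; exact ⟨hm, hqab.2⟩), rfl⟩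
        · have hm : s(b, q) ∈ L := by rw [← h]; exact hpq
          exact Or.inl ⟨q, Or.inr (by rw [sideSet_eq (Ne.symm hab)]; exact ⟨hm, hqab.1⟩), rfl⟩
    · push_neg at hpab
      by_cases hqab : q = a ∨ q = b
      · rw [hcmo p hpab.1 hpab.2, hcmab q hqab, Sym2.eq_swap]
        rcases hqab with h | h
        · have hm : s(a, p) ∈ L := by rw [Sym2.eq_swap, ← h]; exact hpq
          exact Or.inl ⟨p, Or.inl (by rw [sideSet_eq hab]; exact ⟨hm, hpab.2⟩), rfl⟩
        · have hm : s(b, p) ∈ L := by rw [Sym2.eq_swap, ← h]; exact hpq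
          exact Or.inl ⟨p, Or.inr (by rw [sideSet_eq (Ne.symm hab)]; exact ⟨hm, hpab.1⟩), rfl⟩
      · push_neg at hqab
        rw [hcmo p hpab.1 hpab.2, hcmo q hqab.1 hqab.2]
        refine Or.inr ⟨hpq, ?_, ?_⟩
        · intro hmem
          rcases Sym2.mem_iff.mp hmem with h | h
          · exact hpab.1 h.symm
          · exact hqab.1 h.symm
        · intro hmem
          rcases Sym2.mem_iff.mp hmem with h | h
          · exact hpab.2 h.symm
          · exact hqab.2 h.symm
  · intro hc
    rcases hc with ⟨x, hx, rfl⟩ | hc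
    · rcases hx with hx | hx
      · have := mem_sideA hL hx
        have hxb := sideA_not_b hx
        refine ⟨a, x, this.2.2, ?_, ?_⟩
        · rw [hcmab a (Or.inl rfl), hcmo x this.2.1 hxb]
          exact fun h => hvX (by rw [h]; exact this.1)
        · rw [hcmab a (Or.inl rfl), hcmo x this.2.1 hxb]
      · have := mem_sideA hL hx
        have hxa := sideA_not_b hx
        refine ⟨b, x, this.2.2, ?_, ?_⟩
        · rw [hcmab b (Or.inr rfl), hcmo x hxa this.2.1]
          exact fun h => hvX (by rw [h]; exact this.1)
        · rw [hcmab b (Or.inr rfl), hcmo x hxa this.2.1]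
    · obtain ⟨hcL, haC, hbC⟩ := hc
      induction c using Sym2.ind with
      | _ p q =>
        have hpa : p ≠ a := fun h => haC (by rw [← h]; exact Sym2.mem_mk_left p q)
        have hpb : p ≠ b := fun h => hbC (by rw [← h]; exact Sym2.mem_mk_left p q)
        have hqa : q ≠ a := fun h => haC (by rw [← h]; exact Sym2.mem_mk_right p q)
        have hqb : q ≠ b := fun h => hbC (by rw [← h]; exact Sym2.mem_mk_right p q)
        have hnd := (hL _ hcL).1
        refine ⟨p, q, hcL, ?_, ?_⟩
        · rw [hcmo p hpa hpb, hcmo q hqa hqb]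
          exact fun h => hnd (Sym2.mk_isDiag_iff.mpr h)
        · rw [hcmo p hpa hpb, hcmo q hqa hqb]

end Cords

section Cards

variable {X : Set U} {L : Set (Sym2 U)} {a b v : U}

lemma sideA_finite (hL : IsCordSet X L) (hXfin : X.Finite) :
    (sideSet L a b).Finite :=
  hXfin.subset fun _ hx => (mem_sideA hL hx).1

lemma inner_finite (hL : IsCordSet X L) (hXfin : X.Finite) :
    (innerCords L a b).Finite :=
  (cordSet_finite hL hXfin).subset fun _ hc => hc.1

lemma a_mem_image {x : U} {A : Set U} (hx : x ∈ A) :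
    a ∈ ((fun y => s(a, y)) x : Sym2 U) := Sym2.mem_mk_left _ _

lemma card_L (hL : IsCordSet X L) (hXfin : X.Finite) (hvX : v ∉ X) (hab : a ≠ b)
    (habL : s(a, b) ∈ L) :
    L.ncard = 1 + (innerCords L a b).ncard + (sideSet L a b).ncard
      + (sideSet L b a).ncard := by
  have hA := sideA_finite (a := a) (b := b) hL hXfin
  have hB := sideA_finite (a := b) (b := a) hL hXfin
  have hI := inner_finite (a := a) (b := b) hL hXfin
  have hD12 : Disjoint (innerCords L a b) ((fun x => s(a, x)) '' sideSet L a b) := by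
    rw [Set.disjoint_left]
    rintro c ⟨_, hac, _⟩ ⟨x, _, rfl⟩
    exact hac (Sym2.mem_mk_left a x)
  have hD3 : Disjoint (innerCords L a b ∪ (fun x => s(a, x)) '' sideSet L a b)
      ((fun x => s(b, x)) '' sideSet L b a) := by
    rw [Set.disjoint_left]
    rintro c hc ⟨x, hx, rfl⟩
    rcases hc with ⟨_, _, hbc⟩ | ⟨y, hy, hcy⟩
    · exact hbc (Sym2.mem_mk_left b x)
    · rcases Sym2.eq_iff.mp hcy with ⟨h1, _⟩ | ⟨h1, h2⟩
      · exact hab h1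
      · exact sideA_not_b hy h2
  have hnotmem : s(a, b) ∉ innerCords L a b ∪ (fun x => s(a, x)) '' sideSet L a b
      ∪ (fun x => s(b, x)) '' sideSet L b a := by
    rintro ((⟨_, hac, _⟩ | ⟨x, hx, hcx⟩) | ⟨x, hx, hcx⟩)
    · exact hac (Sym2.mem_mk_left a b)
    · rcases Sym2.eq_iff.mp hcx with ⟨_, h2⟩ | ⟨h1, _⟩
      · exact sideA_not_b hx h2
      · exact hab h1
    · rcases Sym2.eq_iff.mp hcx with ⟨h1, _⟩ | ⟨_, h2⟩
      · exact hab h1.symm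
      · exact sideA_not_b hx h2
  conv_lhs => rw [L_decomp hL hvX hab habL]
  rw [Set.ncard_insert_of_notMem hnotmem
    (((hI.union (hA.image _)).union (hB.image _)))]
  rw [Set.ncard_union_eq hD3 (hI.union (hA.image _)) (hB.image _),
    Set.ncard_union_eq hD12 hI (hA.image _),
    Set.ncard_image_of_injective _ (sym2_left_inj a),
    Set.ncard_image_of_injective _ (sym2_left_inj b)]
  omega

lemma card_LU (hL : IsCordSet X L) (hXfin : X.Finite) (hvX : v ∉ X) (hab : a ≠ b) :
    (cherryLU L a b v).ncard =
      (sideSet L a b ∪ sideSet L b a).ncard + (innerCords L a b).ncard := by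
  have hA := sideA_finite (a := a) (b := b) hL hXfin
  have hB := sideA_finite (a := b) (b := a) hL hXfin
  have hI := inner_finite (a := a) (b := b) hL hXfin
  have hD : Disjoint ((fun x => s(v, x)) '' (sideSet L a b ∪ sideSet L b a))
      (innerCords L a b) := by
    rw [Set.disjoint_left]
    rintro c ⟨x, _, rfl⟩ ⟨hcL, _, _⟩
    exact hvX ((hL _ hcL).2 v (Sym2.mem_mk_left v x))
  rw [LU_eq hL hvX hab,
    Set.ncard_union_eq hD ((hA.union hB).image _) hI,
    Set.ncard_image_of_injective _ (sym2_left_inj v)]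

lemma card_L_LU (hL : IsCordSet X L) (hXfin : X.Finite) (hvX : v ∉ X) (hab : a ≠ b)
    (habL : s(a, b) ∈ L) :
    L.ncard = (cherryLU L a b v).ncard + 1 + (sideSet L a b ∩ sideSet L b a).ncard := by
  have hA := sideA_finite (a := a) (b := b) hL hXfin
  have hB := sideA_finite (a := b) (b := a) hL hXfin
  have := Set.ncard_union_add_ncard_inter (sideSet L a b) (sideSet L b a) hA hB
  rw [card_L hL hXfin hvX hab habL, card_LU hL hXfin hvX hab]
  omega

end Cards
/-! ### Distance computations in the cherry context -/

namespace Ctx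

variable {X : Set U} {G : SimpleGraph U} {a b v w : U}
variable (hc : Ctx X G a b v w)
include hc

lemma pfin_G (x y : U) : (pathEdges G x y).Finite :=
  hc.hGfin.subset pathEdges_subset

lemma pfin_TU (x y : U) :
    (pathEdges (restrict G (G.support \ {a, b})) x y).Finite :=
  hc.TU_fin.subset pathEdges_subset

lemma tdist_ab (δ : Sym2 U → ℝ) : tdist G δ a b = δ s(a, v) + δ s(b, v) := by
  rw [tdist, hc.pathEdges_ab]
  exact finsum_mem_pair hc.ea_ne_eb

lemma tdist_ax {x : U} (hx : x ∈ X) (hxa : x ≠ a) (hxb : x ≠ b) (δ : Sym2 U → ℝ) :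
    tdist G δ a x = δ s(a, v) + tdist (restrict G (G.support \ {a, b})) δ v x := by
  rw [tdist, hc.pathEdges_from_cherry (Or.inl rfl) hx hxa hxb, Set.insert_eq]
  have hea : s(a, v) ∉ pathEdges (restrict G (G.support \ {a, b})) v x :=
    fun h => hc.ea_not_mem_TU (pathEdges_subset h)
  rw [finsum_mem_union (Set.disjoint_singleton_left.mpr hea)
    (Set.finite_singleton _) (hc.pfin_TU v x), finsum_mem_singleton]
  rfl

lemma tdist_bx {x : U} (hx : x ∈ X) (hxa : x ≠ a) (hxb : x ≠ b) (δ : Sym2 U → ℝ) :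
    tdist G δ b x = δ s(b, v) + tdist (restrict G (G.support \ {a, b})) δ v x := by
  rw [tdist, hc.pathEdges_from_cherry (Or.inr rfl) hx hxa hxb, Set.insert_eq]
  have heb : s(b, v) ∉ pathEdges (restrict G (G.support \ {a, b})) v x :=
    fun h => hc.eb_not_mem_TU (pathEdges_subset h)
  rw [finsum_mem_union (Set.disjoint_singleton_left.mpr heb)
    (Set.finite_singleton _) (hc.pfin_TU v x), finsum_mem_singleton]
  rfl

lemma tdist_inner {x y : U} (hx : x ∈ X) (hxa : x ≠ a) (hxb : x ≠ b)
    (hy : y ∈ X) (hya : y ≠ a) (hyb : y ≠ b) (δ : Sym2 U → ℝ) :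
    tdist G δ x y = tdist (restrict G (G.support \ {a, b})) δ x y := by
  rw [tdist, tdist, hc.pathEdges_inner hx hxa hxb hy hya hyb]

lemma tdist_ev_ind {x : U} (hx : x ∈ X) (hxa : x ≠ a) (hxb : x ≠ b) (r : ℝ) :
    tdist (restrict G (G.support \ {a, b}))
      (fun e => if e = s(v, w) then r else 0) v x = r := by
  rw [tdist, finsum_mem_ite_eq (hc.pfin_TU v x), if_pos (hc.ev_mem_path_v hx hxa hxb)]

lemma tdist_ev_ind_inner {x y : U} (hx : x ∈ X) (hxa : x ≠ a) (hxb : x ≠ b)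
    (hy : y ∈ X) (hya : y ≠ a) (hyb : y ≠ b) (r : ℝ) :
    tdist (restrict G (G.support \ {a, b}))
      (fun e => if e = s(v, w) then r else 0) x y = 0 := by
  rw [tdist, finsum_mem_ite_eq (hc.pfin_TU x y),
    if_neg (hc.ev_not_mem_path_inner hx hxa hxb hy hya hyb)]

end Ctx
/-! ### Linear algebra of cord functionals -/

section LinearAlgebra

variable {H : SimpleGraph U} {LU : Set (Sym2 U)}

lemma pairPathEdges_subset {c : Sym2 U} : pairPathEdges H c ⊆ H.edgeSet :=
  fun _ he => he.1

lemma pdist_congr' {c : Sym2 U} {ω ω' : Sym2 U → ℝ}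
    (h : ∀ e ∈ pairPathEdges H c, ω e = ω' e) : pdist H ω c = pdist H ω' c :=
  finsum_mem_congr rfl h

lemma pdist_add (hE : H.edgeSet.Finite) (c : Sym2 U) (ω ω' : Sym2 U → ℝ) :
    pdist H (fun e => ω e + ω' e) c = pdist H ω c + pdist H ω' c := by
  have h : (pairPathEdges H c).Finite := hE.subset pairPathEdges_subset
  rw [pdist, pdist, pdist, finsum_mem_eq_finite_toFinset_sum _ h,
    finsum_mem_eq_finite_toFinset_sum _ h, finsum_mem_eq_finite_toFinset_sum _ h,
    ← Finset.sum_add_distrib]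

lemma pdist_smul (hE : H.edgeSet.Finite) (c : Sym2 U) (r : ℝ) (ω : Sym2 U → ℝ) :
    pdist H (fun e => r * ω e) c = r * pdist H ω c := by
  have h : (pairPathEdges H c).Finite := hE.subset pairPathEdges_subset
  rw [pdist, pdist, finsum_mem_eq_finite_toFinset_sum _ h,
    finsum_mem_eq_finite_toFinset_sum _ h, Finset.mul_sum]

variable (H LU) in
/-- Extension by zero of a vector indexed by the edges. -/
noncomputable def extE (f : ↥H.edgeSet → ℝ) : Sym2 U → ℝ :=
  fun e => if h : e ∈ H.edgeSet then f ⟨e, h⟩ else 0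

lemma extE_off {f : ↥H.edgeSet → ℝ} : ∀ e ∉ H.edgeSet, extE H f e = 0 :=
  fun e he => dif_neg he

variable (H LU) in
/-- The linear map sending an edge weighting to its cord functional values. -/
noncomputable def Phi (hE : H.edgeSet.Finite) : (↥H.edgeSet → ℝ) →ₗ[ℝ] (↥LU → ℝ) where
  toFun f := fun c => pdist H (extE H f) c
  map_add' f g := by
    funext c
    show pdist H (extE H (f + g)) ↑c = pdist H (extE H f) ↑c + pdist H (extE H g) ↑c
    have hext : extE H (f + g) = fun e => extE H f e + extE H g e := by
      funext e
      by_cases h : e ∈ H.edgeSet <;> simp [extE, h]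
    rw [hext]
    exact pdist_add hE _ _ _
  map_smul' r f := by
    funext c
    show pdist H (extE H (r • f)) ↑c = r * pdist H (extE H f) ↑c
    have hext : extE H (r • f) = fun e => r * extE H f e := by
      funext e
      by_cases h : e ∈ H.edgeSet <;> simp [extE, h]
    rw [hext]
    exact pdist_smul hE _ _ _

lemma Phi_apply (hE : H.edgeSet.Finite) (f : ↥H.edgeSet → ℝ) (c : ↥LU) :
    Phi H LU hE f c = pdist H (extE H f) ↑c := rfl

/-- Injectivity of `Phi` from kernel-triviality. -/
lemma Phi_injective (hE : H.edgeSet.Finite)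
    (hker : ∀ η : Sym2 U → ℝ, (∀ e, e ∉ H.edgeSet → η e = 0) →
      (∀ c ∈ LU, pdist H η c = 0) → η = 0) :
    Function.Injective (Phi H LU hE) := by
  rw [injective_iff_map_eq_zero (Phi H LU hE)]
  intro f hf
  have hη := hker (extE H f) extE_off (fun c hc => by
    have := congrFun hf ⟨c, hc⟩
    simpa [Phi_apply] using this)
  funext e
  have := congrFun hη ↑e
  rwa [extE, dif_pos e.2] at this

lemma ncard_eq_card (s : Set (Sym2 U)) (hs : s.Finite) :
    letI := hs.fintype
    s.ncard = Fintype.card s := by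
  letI := hs.fintype
  rw [← Nat.card_coe_set_eq, Nat.card_eq_fintype_card]

/-- Dimension bound: kernel-triviality forces at least `|E|` cords. -/
lemma card_le_of_ker (hE : H.edgeSet.Finite) (hLU : LU.Finite)
    (hker : ∀ η : Sym2 U → ℝ, (∀ e, e ∉ H.edgeSet → η e = 0) →
      (∀ c ∈ LU, pdist H η c = 0) → η = 0) :
    H.edgeSet.ncard ≤ LU.ncard := by
  letI := hE.fintype
  letI := hLU.fintype
  have hinj := Phi_injective (LU := LU) hE hker
  have := LinearMap.finrank_le_finrank_of_injective hinj
  rwa [Module.finrank_fintype_fun_eq_card, Module.finrank_fintype_fun_eq_card,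
    ← ncard_eq_card _ hE, ← ncard_eq_card _ hLU] at this

/-- Transform a finsum over a finite cord set into a subtype sum. -/
lemma rho_sum_eq (hLU : LU.Finite) (ρ F : Sym2 U → ℝ) :
    letI := hLU.fintype
    (∑ᶠ c ∈ LU, ρ c * F c) = ∑ c : ↥LU, ρ ↑c * F ↑c := by
  letI := hLU.fintype
  exact finsum_mem_eq_sum_subtype hLU _

/-- Existence of a non-zero annihilating functional when there are more cords
than edges. -/
lemma exists_annihilator (hE : H.edgeSet.Finite) (hLU : LU.Finite)
    (hcard : H.edgeSet.ncard < LU.ncard) :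
    ∃ ρ : Sym2 U → ℝ, ρ ≠ 0 ∧ (∀ c, ρ c ≠ 0 → c ∈ LU) ∧ RhoAnnihilates H LU ρ := by
  letI := hE.fintype
  letI := hLU.fintype
  set φ : ↥LU → ((↥H.edgeSet → ℝ) →ₗ[ℝ] ℝ) :=
    fun c => (LinearMap.proj c).comp (Phi H LU hE) with hφ
  have hnli : ¬ LinearIndependent ℝ φ := by
    intro hli
    have h1 := hli.fintype_card_le_finrank
    have h2 : Fintype.card ↥LU ≤
        Module.finrank ℝ (Module.Dual ℝ (↥H.edgeSet → ℝ)) := h1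
    rw [Subspace.dual_finrank_eq, Module.finrank_fintype_fun_eq_card] at h2
    rw [ncard_eq_card _ hE, ncard_eq_card _ hLU] at hcard
    omega
  obtain ⟨g, hgsum, c0, hg0⟩ := Fintype.not_linearIndependent_iff.mp hnli
  refine ⟨fun c => if h : c ∈ LU then g ⟨c, h⟩ else 0, ?_, ?_, ?_⟩
  · intro h
    have hcf : (if h : (↑c0 : Sym2 U) ∈ LU then g ⟨↑c0, h⟩ else 0) = 0 :=
      congrFun h ↑c0
    rw [dif_pos c0.2] at hcf
    exact hg0 (by rwa [Subtype.coe_eta] at hcf)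
  · intro c hc
    by_contra h
    exact hc (dif_neg h)
  · intro η hη
    rw [rho_sum_eq hLU]
    have hres : ∀ c : ↥LU, pdist H η ↑c = pdist H (extE H (fun e => η ↑e)) ↑c := by
      intro c
      refine pdist_congr' fun e he => ?_
      rw [extE, dif_pos (pairPathEdges_subset he)]
    calc ∑ c : ↥LU, (if h : (c : Sym2 U) ∈ LU then g ⟨↑c, h⟩ else 0) * pdist H η ↑c
        = ∑ c : ↥LU, (g c • φ c) (fun e => η ↑e) := by
          refine Finset.sum_congr rfl fun c _ => ?_
          rw [dif_pos c.2, hres c, Subtype.coe_eta]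
          simp only [smul_eq_mul, hφ, LinearMap.smul_apply, LinearMap.comp_apply,
            LinearMap.proj_apply, Phi_apply]
      _ = (∑ c : ↥LU, g c • φ c) (fun e => η ↑e) := by
          rw [LinearMap.coe_sum, Finset.sum_apply]
      _ = 0 := by rw [hgsum]; rfl

/-- Surjectivity onto the annihilator of a single dependency, in the critical
dimension. -/
lemma exists_preimage (hE : H.edgeSet.Finite) (hLU : LU.Finite)
    (hker : ∀ η : Sym2 U → ℝ, (∀ e, e ∉ H.edgeSet → η e = 0) →
      (∀ c ∈ LU, pdist H η c = 0) → η = 0)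
    (hcard : LU.ncard = H.edgeSet.ncard + 1)
    (ρ : Sym2 U → ℝ) (hρ0 : ρ ≠ 0) (hρsupp : ∀ c, ρ c ≠ 0 → c ∈ LU)
    (hρann : RhoAnnihilates H LU ρ)
    (u : Sym2 U → ℝ) (hu : (∑ᶠ c ∈ LU, ρ c * u c) = 0) :
    ∃ η : Sym2 U → ℝ, (∀ e, e ∉ H.edgeSet → η e = 0) ∧
      ∀ c ∈ LU, pdist H η c = u c := by
  letI := hE.fintype
  letI := hLU.fintype
  have hinj := Phi_injective (LU := LU) hE hker
  set fρ : (↥LU → ℝ) →ₗ[ℝ] ℝ :=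
    ∑ c : ↥LU, ρ ↑c • LinearMap.proj c with hfρ
  have hfρ_apply : ∀ z : ↥LU → ℝ, fρ z = ∑ c : ↥LU, ρ ↑c * z c := by
    intro z
    rw [hfρ, LinearMap.coe_sum, Finset.sum_apply]
    rfl
  have hrange : LinearMap.range (Phi H LU hE) ≤ LinearMap.ker fρ := by
    rintro z ⟨f, rfl⟩
    rw [LinearMap.mem_ker, hfρ_apply]
    have := hρann (extE H f) extE_off
    rw [rho_sum_eq hLU] at this
    exact this
  have hfρ0 : fρ ≠ 0 := by
    have : ∃ c : Sym2 U, ρ c ≠ 0 := by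
      by_contra h
      push_neg at h
      exact hρ0 (funext fun c => h c)
    obtain ⟨c1, hc1⟩ := this
    have hc1m : c1 ∈ LU := hρsupp c1 hc1
    intro h
    have hcf : fρ (Pi.single ⟨c1, hc1m⟩ 1) = 0 := by rw [h]; rfl
    rw [hfρ_apply] at hcf
    rw [Finset.sum_eq_single (⟨c1, hc1m⟩ : ↥LU)] at hcf
    · rw [Pi.single_eq_same, mul_one] at hcf
      exact hc1 hcf
    · intro c _ hne
      rw [Pi.single_eq_of_ne hne, mul_zero]
    · intro h'
      exact absurd (Finset.mem_univ _) h'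
  have hker_eq : LinearMap.ker fρ = LinearMap.range (Phi H LU hE) := by
    have h1 : Module.finrank ℝ (LinearMap.range (Phi H LU hE)) =
        Fintype.card ↥H.edgeSet := by
      rw [← (LinearEquiv.ofInjective _ hinj).finrank_eq,
        Module.finrank_fintype_fun_eq_card]
    have h2 : Module.finrank ℝ (LinearMap.ker fρ) = Fintype.card ↥LU - 1 := by
      have hrn := LinearMap.finrank_range_add_finrank_ker fρ
      have hsurj : Function.Surjective fρ := by
        obtain ⟨z0, hz0⟩ : ∃ z0, fρ z0 ≠ 0 := by
          by_contra h
          push_neg at h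
          exact hfρ0 (LinearMap.ext fun z => h z)
        intro r
        refine ⟨(r / fρ z0) • z0, ?_⟩
        rw [map_smul, smul_eq_mul, div_mul_cancel₀ _ hz0]
      rw [LinearMap.range_eq_top.mpr hsurj] at hrn
      rw [Module.finrank_fintype_fun_eq_card] at hrn
      have : Module.finrank ℝ (⊤ : Submodule ℝ ℝ) = 1 := by
        rw [finrank_top, Module.finrank_self]
      omega
    have hle : Module.finrank ℝ (LinearMap.ker fρ) ≤
        Module.finrank ℝ (LinearMap.range (Phi H LU hE)) := by
      rw [h1, h2, ← ncard_eq_card _ hE, ← ncard_eq_card _ hLU, hcard]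
      omega
    exact (Submodule.eq_of_le_of_finrank_le hrange hle).symm
  have huz : (fun c : ↥LU => u ↑c) ∈ LinearMap.ker fρ := by
    rw [LinearMap.mem_ker, hfρ_apply]
    rw [rho_sum_eq hLU] at hu
    exact hu
  rw [hker_eq] at huz
  obtain ⟨f, hf⟩ := huz
  refine ⟨extE H f, extE_off, fun c hc => ?_⟩
  have := congrFun hf ⟨c, hc⟩
  rw [Phi_apply] at this
  exact this

end LinearAlgebra

/-! ### Small auxiliary lemmas for the main theorem -/

lemma finsum_mem_eq_zero {α : Type*} {s : Set α} {f : α → ℝ}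
    (h : ∀ x ∈ s, f x = 0) : (∑ᶠ x ∈ s, f x) = 0 := by
  rw [finsum_mem_congr rfl h]
  simp

lemma tdist_of_sym2_eq {H : SimpleGraph U} (η : Sym2 U → ℝ) {x y p q : U}
    (h : s(x, y) = s(p, q)) : tdist H η x y = tdist H η p q := by
  rcases Sym2.eq_iff.mp h with ⟨h1, h2⟩ | ⟨h1, h2⟩
  · subst h1; subst h2; rfl
  · subst h1; subst h2; exact tdist_comm η _ _

lemma mem_L_cases {X : Set U} {L : Set (Sym2 U)} {a b : U}
    (hL : IsCordSet X L) (hab : a ≠ b) {c : Sym2 U} (hc : c ∈ L) :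
    c = s(a, b) ∨ (∃ x ∈ sideSet L a b, c = s(a, x)) ∨
      (∃ x ∈ sideSet L b a, c = s(b, x)) ∨ c ∈ innerCords L a b := by
  induction c using Sym2.ind with
  | _ p q =>
    have hnd := (hL _ hc).1
    have hpq : p ≠ q := fun h => hnd (Sym2.mk_isDiag_iff.mpr h)
    by_cases hpa : p = a
    · subst hpa
      by_cases hqb : q = b
      · subst hqb; exact Or.inl rfl
      · refine Or.inr (Or.inl ⟨q, ?_, rfl⟩)
        rw [sideSet_eq hab]
        exact ⟨hc, hqb⟩
    · by_cases hpb : p = b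
      · subst hpb
        by_cases hqa : q = a
        · subst hqa
          exact Or.inl Sym2.eq_swap
        · refine Or.inr (Or.inr (Or.inl ⟨q, ?_, rfl⟩))
          rw [sideSet_eq (Ne.symm hab)]
          exact ⟨hc, hqa⟩
      · by_cases hqa : q = a
        · subst hqa
          refine Or.inr (Or.inl ⟨p, ?_, Sym2.eq_swap⟩)
          rw [sideSet_eq hab]
          exact ⟨by rwa [Sym2.eq_swap] at hc, hpb⟩
        · by_cases hqb : q = b
          · subst hqb
            refine Or.inr (Or.inr (Or.inl ⟨p, ?_, Sym2.eq_swap⟩))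
            rw [sideSet_eq (Ne.symm hab)]
            exact ⟨by rwa [Sym2.eq_swap] at hc, hpa⟩
          · refine Or.inr (Or.inr (Or.inr ⟨hc, ?_, ?_⟩))
            · intro hmem
              rcases Sym2.mem_iff.mp hmem with h | h
              · exact hpa h.symm
              · exact hqa h.symm
            · intro hmem
              rcases Sym2.mem_iff.mp hmem with h | h
              · exact hpb h.symm
              · exact hqb h.symm

/-- Data of an inner cord. -/
lemma inner_rep {X : Set U} {L : Set (Sym2 U)} {a b : U} (hL : IsCordSet X L)
    {c : Sym2 U} (hc : c ∈ innerCords L a b) :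
    ∃ x y : U, c = s(x, y) ∧ s(x, y) ∈ L ∧ x ∈ X ∧ y ∈ X ∧
      x ≠ a ∧ x ≠ b ∧ y ≠ a ∧ y ≠ b := by
  obtain ⟨hcL, haC, hbC⟩ := hc
  induction c using Sym2.ind with
  | _ p q =>
    refine ⟨p, q, rfl, hcL, (hL _ hcL).2 p (Sym2.mem_mk_left p q),
      (hL _ hcL).2 q (Sym2.mem_mk_right p q), ?_, ?_, ?_, ?_⟩
    · exact fun h => haC (by rw [← h]; exact Sym2.mem_mk_left p q)
    · exact fun h => hbC (by rw [← h]; exact Sym2.mem_mk_left p q)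
    · exact fun h => haC (by rw [← h]; exact Sym2.mem_mk_right p q)
    · exact fun h => hbC (by rw [← h]; exact Sym2.mem_mk_right p q)
/-- Theorem 5, second part: the characterization of tight edge-weight lassos
via the cherry reduction: `L` is a tight edge-weight lasso for `T` iff
`|L| = |E|`, (U1), (U2), and (U3-a') or (U3-b') holds. -/
theorem cherry_tight_edgeWeightLasso_iff {U : Type}
    (X : Set U) (G : SimpleGraph U)
    (hXfin : X.Finite) (hX3 : 3 ≤ X.ncard) (hT : IsXTree X G)
    (a b v : U) (hch : IsProperCherry G a b v)
    (L : Set (Sym2 U)) (hL : IsCordSet X L) :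
    (EdgeWeightLasso G L ∧ L.ncard = G.edgeSet.ncard) ↔
      (L.ncard = G.edgeSet.ncard ∧ s(a, b) ∈ L ∧
       EdgeWeightLasso (restrict G (G.support \ {a, b})) (cherryLU L a b v) ∧
       (((cherryLU L a b v).ncard = (restrict G (G.support \ {a, b})).edgeSet.ncard) ∨
        ((cherryLU L a b v).ncard = (restrict G (G.support \ {a, b})).edgeSet.ncard + 1 ∧
         (cherryLU L a b v).ncard + 1 = L.ncard ∧
         ∀ ρ : Sym2 U → ℝ, ρ ≠ 0 →
           (∀ c, ρ c ≠ 0 → c ∈ cherryLU L a b v) →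
           RhoAnnihilates (restrict G (G.support \ {a, b})) (cherryLU L a b v) ρ →
           (∑ᶠ y ∈ sideSet L a b, ρ (s(y, v))) ≠ 0))) := by
  obtain ⟨w, hc⟩ := ctx_of hT hch
  have hE : G.edgeSet.Finite := hc.hGfin
  have hEU : (restrict G (G.support \ {a, b})).edgeSet.Finite := hc.TU_fin
  have hAfin : (sideSet L a b).Finite := sideA_finite hL hXfin
  have hBfin : (sideSet L b a).Finite := sideA_finite hL hXfin
  have hIfin : (innerCords L a b).Finite := inner_finite hL hXfin
  have hLUfin : (cherryLU L a b v).Finite := by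
    rw [LU_eq hL hc.hvX hc.hab]
    exact (((hAfin.union hBfin)).image _).union hIfin
  have hAmem : ∀ x ∈ sideSet L a b, x ∈ X ∧ x ≠ a ∧ x ≠ b ∧ s(a, x) ∈ L :=
    fun x hx => ⟨(mem_sideA hL hx).1, (mem_sideA hL hx).2.1, sideA_not_b hx,
      (mem_sideA hL hx).2.2⟩
  have hBmem : ∀ x ∈ sideSet L b a, x ∈ X ∧ x ≠ a ∧ x ≠ b ∧ s(b, x) ∈ L :=
    fun x hx => ⟨(mem_sideA hL hx).1, sideA_not_b hx, (mem_sideA hL hx).2.1,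
      (mem_sideA hL hx).2.2⟩
  have hABmem : ∀ x ∈ sideSet L a b ∪ sideSet L b a, x ∈ X ∧ x ≠ a ∧ x ≠ b := by
    intro x hx
    rcases hx with hx | hx
    · exact ⟨(hAmem x hx).1, (hAmem x hx).2.1, (hAmem x hx).2.2.1⟩
    · exact ⟨(hBmem x hx).1, (hBmem x hx).2.1, (hBmem x hx).2.2.1⟩
  have hALU : ∀ x ∈ sideSet L a b, s(v, x) ∈ cherryLU L a b v := by
    intro x hx
    rw [LU_eq hL hc.hvX hc.hab]
    exact Or.inl ⟨x, Or.inl hx, rfl⟩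
  have hBLU : ∀ x ∈ sideSet L b a, s(v, x) ∈ cherryLU L a b v := by
    intro x hx
    rw [LU_eq hL hc.hvX hc.hab]
    exact Or.inl ⟨x, Or.inr hx, rfl⟩
  have hILU : ∀ c ∈ innerCords L a b, c ∈ cherryLU L a b v := by
    intro c hcI
    rw [LU_eq hL hc.hvX hc.hab]
    exact Or.inr hcI
  have hLUcases : ∀ c ∈ cherryLU L a b v,
      (∃ x ∈ sideSet L a b ∪ sideSet L b a, c = s(v, x)) ∨ c ∈ innerCords L a b := by
    intro c hcm
    rw [LU_eq hL hc.hvX hc.hab] at hcm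
    rcases hcm with ⟨x, hx, rfl⟩ | hcm
    · exact Or.inl ⟨x, hx, rfl⟩
    · exact Or.inr hcm
  have HsumF : ∀ F : Sym2 U → ℝ, (∑ᶠ c ∈ cherryLU L a b v, F c) =
      (∑ᶠ x ∈ sideSet L a b ∪ sideSet L b a, F s(v, x)) +
        ∑ᶠ c ∈ innerCords L a b, F c := by
    intro F
    rw [LU_eq hL hc.hvX hc.hab]
    have hD : Disjoint ((fun x => s(v, x)) '' (sideSet L a b ∪ sideSet L b a))
        (innerCords L a b) := by
      rw [Set.disjoint_left]
      rintro c ⟨x, _, rfl⟩ ⟨hcL, _, _⟩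
      exact hc.hvX ((hL _ hcL).2 v (Sym2.mem_mk_left v x))
    rw [finsum_mem_union hD ((hAfin.union hBfin).image _) hIfin,
      finsum_mem_image ((sym2_left_inj v).injOn)]
  have Hev : ∀ ρ' : Sym2 U → ℝ,
      RhoAnnihilates (restrict G (G.support \ {a, b})) (cherryLU L a b v) ρ' →
      (∑ᶠ x ∈ sideSet L a b ∪ sideSet L b a, ρ' s(v, x)) = 0 := by
    intro ρ' hann
    have h0 := hann (fun e => if e = s(v, w) then (1 : ℝ) else 0)
      (fun e he => if_neg (fun h => he (by rw [h]; exact hc.ev_mem)))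
    rw [HsumF] at h0
    have h1 : (∑ᶠ x ∈ sideSet L a b ∪ sideSet L b a,
        ρ' s(v, x) * pdist (restrict G (G.support \ {a, b}))
          (fun e => if e = s(v, w) then (1 : ℝ) else 0) s(v, x)) =
        ∑ᶠ x ∈ sideSet L a b ∪ sideSet L b a, ρ' s(v, x) := by
      refine finsum_mem_congr rfl fun x hx => ?_
      obtain ⟨hX', ha', hb'⟩ := hABmem x hx
      rw [pdist_eq_tdist, hc.tdist_ev_ind hX' ha' hb', mul_one]
    have h2 : (∑ᶠ c ∈ innerCords L a b,
        ρ' c * pdist (restrict G (G.support \ {a, b}))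
          (fun e => if e = s(v, w) then (1 : ℝ) else 0) c) = 0 := by
      refine finsum_mem_eq_zero fun c hcI => ?_
      obtain ⟨p, q, hceq, _, hpX, hqX, hpa, hpb, hqa, hqb⟩ := inner_rep hL hcI
      rw [hceq, pdist_eq_tdist, hc.tdist_ev_ind_inner hpX hpa hpb hqX hqa hqb,
        mul_zero]
    rw [h1, h2, add_zero] at h0
    exact h0
  have hkerG := edgeWeightLasso_iff_ker hE L
  have hkerTU := edgeWeightLasso_iff_ker hEU (cherryLU L a b v)
  have hcardE := hc.card_edges
  constructor
  · -- Forward direction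
    rintro ⟨hlasso, hcard⟩
    have hKG : KerTrivial G L := hkerG.mp hlasso
    -- (U1)
    have habL : s(a, b) ∈ L := by
      by_contra habL
      set δ0 : Sym2 U → ℝ := fun e => if e = s(a, v) ∨ e = s(b, v) then 1
        else if e = s(v, w) then (-1 : ℝ) else 0 with hδ0def
      have hval1 : δ0 s(a, v) = 1 := by rw [hδ0def]; simp
      have hδ0supp : ∀ e, e ∉ G.edgeSet → δ0 e = 0 := by
        intro e he
        have h1 : ¬(e = s(a, v) ∨ e = s(b, v)) := by
          rintro (rfl | rfl)
          exacts [he hc.ea_mem, he hc.eb_mem]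
        have h2 : e ≠ s(v, w) := by
          rintro rfl
          exact he (restrict_edgeSet_subset hc.ev_mem)
        rw [hδ0def]
        simp [h1, h2]
      have hTUcongr : ∀ p q : U,
          tdist (restrict G (G.support \ {a, b})) δ0 p q =
          tdist (restrict G (G.support \ {a, b}))
            (fun e => if e = s(v, w) then (-1 : ℝ) else 0) p q := by
        intro p q
        refine tdist_congr fun e he => ?_
        have heU := pathEdges_subset he
        have h1 : ¬(e = s(a, v) ∨ e = s(b, v)) := by
          rintro (rfl | rfl)
          exacts [hc.ea_not_mem_TU heU, hc.eb_not_mem_TU heU]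
        rw [hδ0def]
        simp [h1]
      have hδ0z : ∀ x y : U, s(x, y) ∈ L → tdist G δ0 x y = 0 := by
        intro x y hxy
        rcases mem_L_cases hL hc.hab hxy with h | ⟨x', hx', heq⟩ | ⟨x', hx', heq⟩ | hinner
        · exact absurd (h ▸ hxy) habL
        · obtain ⟨hX', hxa', hxb', _⟩ := hAmem x' hx'
          rw [tdist_of_sym2_eq δ0 heq, hc.tdist_ax hX' hxa' hxb' δ0, hval1,
            hTUcongr v x', hc.tdist_ev_ind hX' hxa' hxb']
          norm_num
        · obtain ⟨hX', hxa', hxb', _⟩ := hBmem x' hx'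
          have hval2 : δ0 s(b, v) = 1 := by rw [hδ0def]; simp
          rw [tdist_of_sym2_eq δ0 heq, hc.tdist_bx hX' hxa' hxb' δ0, hval2,
            hTUcongr v x', hc.tdist_ev_ind hX' hxa' hxb']
          norm_num
        · have hxX : x ∈ X := (hL _ hinner.1).2 x (Sym2.mem_mk_left x y)
          have hyX : y ∈ X := (hL _ hinner.1).2 y (Sym2.mem_mk_right x y)
          have hxa' : x ≠ a := fun h => hinner.2.1 (by rw [← h]; exact Sym2.mem_mk_left x y)
          have hxb' : x ≠ b := fun h => hinner.2.2 (by rw [← h]; exact Sym2.mem_mk_left x y)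
          have hya' : y ≠ a := fun h => hinner.2.1 (by rw [← h]; exact Sym2.mem_mk_right x y)
          have hyb' : y ≠ b := fun h => hinner.2.2 (by rw [← h]; exact Sym2.mem_mk_right x y)
          rw [hc.tdist_inner hxX hxa' hxb' hyX hya' hyb', hTUcongr x y,
            hc.tdist_ev_ind_inner hxX hxa' hxb' hyX hya' hyb']
      have h0 := hKG δ0 hδ0supp hδ0z
      rw [h0] at hval1
      norm_num at hval1
    -- (U2)
    have hKU : KerTrivial (restrict G (G.support \ {a, b})) (cherryLU L a b v) := by
      intro η hsupp hz
      have hea0 : η s(a, v) = 0 := hsupp _ hc.ea_not_mem_TU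
      have heb0 : η s(b, v) = 0 := hsupp _ hc.eb_not_mem_TU
      refine hKG η (fun e he => hsupp e (fun h => he (restrict_edgeSet_subset h))) ?_
      intro x y hxy
      rcases mem_L_cases hL hc.hab hxy with h | ⟨x', hx', heq⟩ | ⟨x', hx', heq⟩ | hinner
      · rw [tdist_of_sym2_eq η h, hc.tdist_ab, hea0, heb0]; ring
      · obtain ⟨hX', hxa', hxb', _⟩ := hAmem x' hx'
        rw [tdist_of_sym2_eq η heq, hc.tdist_ax hX' hxa' hxb' η, hea0,
          hz v x' (hALU x' hx')]
        ring
      · obtain ⟨hX', hxa', hxb', _⟩ := hBmem x' hx'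
        rw [tdist_of_sym2_eq η heq, hc.tdist_bx hX' hxa' hxb' η, heb0,
          hz v x' (hBLU x' hx')]
        ring
      · have hxX : x ∈ X := (hL _ hinner.1).2 x (Sym2.mem_mk_left x y)
        have hyX : y ∈ X := (hL _ hinner.1).2 y (Sym2.mem_mk_right x y)
        have hxa' : x ≠ a := fun h => hinner.2.1 (by rw [← h]; exact Sym2.mem_mk_left x y)
        have hxb' : x ≠ b := fun h => hinner.2.2 (by rw [← h]; exact Sym2.mem_mk_left x y)
        have hya' : y ≠ a := fun h => hinner.2.1 (by rw [← h]; exact Sym2.mem_mk_right x y)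
        have hyb' : y ≠ b := fun h => hinner.2.2 (by rw [← h]; exact Sym2.mem_mk_right x y)
        rw [hc.tdist_inner hxX hxa' hxb' hyX hya' hyb']
        exact hz x y (hILU _ hinner)
    have hkerPU : ∀ η : Sym2 U → ℝ,
        (∀ e, e ∉ (restrict G (G.support \ {a, b})).edgeSet → η e = 0) →
        (∀ c ∈ cherryLU L a b v, pdist (restrict G (G.support \ {a, b})) η c = 0) →
        η = 0 := fun η h1 h2 => hKU η h1 (fun x y hxy => by
          rw [← pdist_eq_tdist]; exact h2 _ hxy)
    have hle := card_le_of_ker hEU hLUfin hkerPU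
    have hcards := card_L_LU hL hXfin hc.hvX hc.hab habL
    refine ⟨hcard, habL, hkerTU.mpr hKU, ?_⟩
    have hk : (sideSet L a b ∩ sideSet L b a).ncard = 0 ∨
        (sideSet L a b ∩ sideSet L b a).ncard = 1 := by omega
    rcases hk with hk | hk
    · -- k = 0 : case (U3-b')
      refine Or.inr ⟨by omega, by omega, ?_⟩
      intro ρ hρ0 hρsupp hρann
      intro hcontra
      have hABdisj : Disjoint (sideSet L a b) (sideSet L b a) := by
        rw [Set.disjoint_iff_inter_eq_empty]
        exact (Set.ncard_eq_zero (hAfin.subset Set.inter_subset_left)).mp hk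
      have hSA : (∑ᶠ x ∈ sideSet L a b, ρ s(v, x)) = 0 := by
        rw [← hcontra]
        exact finsum_mem_congr rfl fun y _ => by rw [Sym2.eq_swap]
      have hSAB := Hev ρ hρann
      rw [finsum_mem_union hABdisj hAfin hBfin] at hSAB
      have hSB : (∑ᶠ x ∈ sideSet L b a, ρ s(v, x)) = 0 := by linarith
      set u : Sym2 U → ℝ := fun c =>
        if c ∈ (fun x => s(v, x)) '' sideSet L a b then (-1 : ℝ)
        else if c ∈ (fun x => s(v, x)) '' sideSet L b a then 1 else 0 with hudef
      have huA : ∀ x ∈ sideSet L a b, u s(v, x) = -1 := by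
        intro x hx
        rw [hudef]
        simp only
        rw [if_pos ⟨x, hx, rfl⟩]
      have huB : ∀ x ∈ sideSet L b a, u s(v, x) = 1 := by
        intro x hx
        have hnA : s(v, x) ∉ (fun x => s(v, x)) '' sideSet L a b := by
          rintro ⟨x', hx', heq⟩
          have : x' = x := sym2_left_inj v heq
          subst this
          exact (Set.disjoint_left.mp hABdisj hx') hx
        rw [hudef]
        simp only
        rw [if_neg hnA, if_pos ⟨x, hx, rfl⟩]
      have huI : ∀ c ∈ innerCords L a b, u c = 0 := by
        intro c hcI
        have hv : ∀ x : U, c ≠ s(v, x) := by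
          intro x h
          exact hc.hvX ((hL _ hcI.1).2 v (by rw [h]; exact Sym2.mem_mk_left v x))
        rw [hudef]
        simp only
        rw [if_neg, if_neg]
        · rintro ⟨x', _, heq⟩; exact hv x' heq.symm
        · rintro ⟨x', _, heq⟩; exact hv x' heq.symm
      have hu : (∑ᶠ c ∈ cherryLU L a b v, ρ c * u c) = 0 := by
        rw [HsumF, finsum_mem_union hABdisj hAfin hBfin]
        have e1 : (∑ᶠ x ∈ sideSet L a b, ρ s(v, x) * u s(v, x)) = 0 := by
          rw [show (∑ᶠ x ∈ sideSet L a b, ρ s(v, x) * u s(v, x)) =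
              ∑ᶠ x ∈ sideSet L a b, ρ s(v, x) * (-1) from
            finsum_mem_congr rfl fun x hx => by rw [huA x hx],
            finsum_mem_mul_const hAfin, hSA, zero_mul]
        have e2 : (∑ᶠ x ∈ sideSet L b a, ρ s(v, x) * u s(v, x)) = 0 := by
          rw [show (∑ᶠ x ∈ sideSet L b a, ρ s(v, x) * u s(v, x)) =
              ∑ᶠ x ∈ sideSet L b a, ρ s(v, x) * 1 from
            finsum_mem_congr rfl fun x hx => by rw [huB x hx],
            finsum_mem_mul_const hBfin, hSB, zero_mul]
        have e3 : (∑ᶠ c ∈ innerCords L a b, ρ c * u c) = 0 :=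
          finsum_mem_eq_zero fun c hcI => by rw [huI c hcI, mul_zero]
        rw [e1, e2, e3]
        ring
      obtain ⟨η, hηsupp, hηval⟩ := exists_preimage hEU hLUfin hkerPU (by omega)
        ρ hρ0 hρsupp hρann u hu
      set δ : Sym2 U → ℝ := fun e => if e = s(a, v) then 1
        else if e = s(b, v) then (-1 : ℝ) else η e with hδdef
      have hδa : δ s(a, v) = 1 := by rw [hδdef]; simp
      have hδb : δ s(b, v) = -1 := by
        rw [hδdef]
        simp [Ne.symm hc.ea_ne_eb]
      have hδcongr : ∀ p q : U,
          tdist (restrict G (G.support \ {a, b})) δ p q =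
          tdist (restrict G (G.support \ {a, b})) η p q := by
        intro p q
        refine tdist_congr fun e he => ?_
        have heU := pathEdges_subset he
        have h1 : e ≠ s(a, v) := fun h => hc.ea_not_mem_TU (h ▸ heU)
        have h2 : e ≠ s(b, v) := fun h => hc.eb_not_mem_TU (h ▸ heU)
        rw [hδdef]
        simp [h1, h2]
      have hδsupp : ∀ e, e ∉ G.edgeSet → δ e = 0 := by
        intro e he
        have h1 : e ≠ s(a, v) := fun h => he (h ▸ hc.ea_mem)
        have h2 : e ≠ s(b, v) := fun h => he (h ▸ hc.eb_mem)
        rw [hδdef]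
        simp only
        rw [if_neg h1, if_neg h2]
        exact hηsupp e (fun h => he (restrict_edgeSet_subset h))
      have hδz : ∀ x y : U, s(x, y) ∈ L → tdist G δ x y = 0 := by
        intro x y hxy
        rcases mem_L_cases hL hc.hab hxy with h | ⟨x', hx', heq⟩ | ⟨x', hx', heq⟩ | hinner
        · rw [tdist_of_sym2_eq δ h, hc.tdist_ab, hδa, hδb]; ring
        · obtain ⟨hX', hxa', hxb', _⟩ := hAmem x' hx'
          rw [tdist_of_sym2_eq δ heq, hc.tdist_ax hX' hxa' hxb' δ, hδa,
            hδcongr v x', ← pdist_eq_tdist, hηval _ (hALU x' hx'), huA x' hx']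
          ring
        · obtain ⟨hX', hxa', hxb', _⟩ := hBmem x' hx'
          rw [tdist_of_sym2_eq δ heq, hc.tdist_bx hX' hxa' hxb' δ, hδb,
            hδcongr v x', ← pdist_eq_tdist, hηval _ (hBLU x' hx'), huB x' hx']
          ring
        · have hxX : x ∈ X := (hL _ hinner.1).2 x (Sym2.mem_mk_left x y)
          have hyX : y ∈ X := (hL _ hinner.1).2 y (Sym2.mem_mk_right x y)
          have hxa' : x ≠ a := fun h => hinner.2.1 (by rw [← h]; exact Sym2.mem_mk_left x y)
          have hxb' : x ≠ b := fun h => hinner.2.2 (by rw [← h]; exact Sym2.mem_mk_left x y)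
          have hya' : y ≠ a := fun h => hinner.2.1 (by rw [← h]; exact Sym2.mem_mk_right x y)
          have hyb' : y ≠ b := fun h => hinner.2.2 (by rw [← h]; exact Sym2.mem_mk_right x y)
          rw [hc.tdist_inner hxX hxa' hxb' hyX hya' hyb', hδcongr x y,
            ← pdist_eq_tdist, hηval _ (hILU _ hinner), huI _ hinner]
      have h0 := hKG δ hδsupp hδz
      rw [h0] at hδa
      norm_num at hδa
    · -- k = 1 : case (U3-a')
      exact Or.inl (by omega)
  · -- Backward direction
    rintro ⟨hcard, habL, hU2, hU3⟩
    refine ⟨hkerG.mpr ?_, hcard⟩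
    have hKU := hkerTU.mp hU2
    have hcards := card_L_LU hL hXfin hc.hvX hc.hab habL
    intro δ hsupp hz
    have hab0 : δ s(a, v) + δ s(b, v) = 0 := by
      rw [← hc.tdist_ab δ]
      exact hz a b habL
    have valA : ∀ x ∈ sideSet L a b,
        tdist (restrict G (G.support \ {a, b})) δ v x = -δ s(a, v) := by
      intro x hx
      obtain ⟨hX', hxa', hxb', hmemL⟩ := hAmem x hx
      have h := hz a x hmemL
      rw [hc.tdist_ax hX' hxa' hxb' δ] at h
      linarith
    have valB : ∀ x ∈ sideSet L b a,
        tdist (restrict G (G.support \ {a, b})) δ v x = -δ s(b, v) := by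
      intro x hx
      obtain ⟨hX', hxa', hxb', hmemL⟩ := hBmem x hx
      have h := hz b x hmemL
      rw [hc.tdist_bx hX' hxa' hxb' δ] at h
      linarith
    have valI : ∀ c ∈ innerCords L a b, ∀ x y : U, c = s(x, y) →
        tdist (restrict G (G.support \ {a, b})) δ x y = 0 := by
      intro c hcI x y hcxy
      have hxX : x ∈ X := (hL _ hcI.1).2 x (by rw [hcxy]; exact Sym2.mem_mk_left x y)
      have hyX : y ∈ X := (hL _ hcI.1).2 y (by rw [hcxy]; exact Sym2.mem_mk_right x y)
      have hxa' : x ≠ a := fun h => hcI.2.1 (by rw [hcxy, ← h]; exact Sym2.mem_mk_left x y)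
      have hxb' : x ≠ b := fun h => hcI.2.2 (by rw [hcxy, ← h]; exact Sym2.mem_mk_left x y)
      have hya' : y ≠ a := fun h => hcI.2.1 (by rw [hcxy, ← h]; exact Sym2.mem_mk_right x y)
      have hyb' : y ≠ b := fun h => hcI.2.2 (by rw [hcxy, ← h]; exact Sym2.mem_mk_right x y)
      rw [← hc.tdist_inner hxX hxa' hxb' hyX hya' hyb']
      exact hz x y (by rw [← hcxy]; exact hcI.1)
    set η : Sym2 U → ℝ := fun e =>
      if e ∈ (restrict G (G.support \ {a, b})).edgeSet then δ e else 0 with hηdef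
    have hηcongr : ∀ p q : U,
        tdist (restrict G (G.support \ {a, b})) η p q =
        tdist (restrict G (G.support \ {a, b})) δ p q := by
      intro p q
      refine tdist_congr fun e he => ?_
      rw [hηdef]
      simp only
      rw [if_pos (pathEdges_subset he)]
    -- α = 0
    have hα : δ s(a, v) = 0 := by
      rcases hU3 with h3a | ⟨h3b1, h3b2, h3ρ⟩
      · -- tight reduced lasso: there is a common neighbour cord
        have hk1 : (sideSet L a b ∩ sideSet L b a).ncard = 1 := by omega
        obtain ⟨x0, hx0⟩ := Set.ncard_eq_one.mp hk1
        have hx0m : x0 ∈ sideSet L a b ∩ sideSet L b a := by rw [hx0]; rfl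
        have h1 := valA x0 hx0m.1
        have h2 := valB x0 hx0m.2
        linarith
      · -- critical case
        have hk0 : (sideSet L a b ∩ sideSet L b a).ncard = 0 := by omega
        have hABdisj : Disjoint (sideSet L a b) (sideSet L b a) := by
          rw [Set.disjoint_iff_inter_eq_empty]
          exact (Set.ncard_eq_zero (hAfin.subset Set.inter_subset_left)).mp hk0
        obtain ⟨ρ, hρ0, hρsupp, hρann⟩ := exists_annihilator hEU hLUfin (by omega)
        have hSA' := h3ρ ρ hρ0 hρsupp hρann
        have hSA : (∑ᶠ x ∈ sideSet L a b, ρ s(v, x)) ≠ 0 := by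
          intro h
          apply hSA'
          rw [← h]
          exact finsum_mem_congr rfl fun y _ => by rw [Sym2.eq_swap]
        have hSAB := Hev ρ hρann
        rw [finsum_mem_union hABdisj hAfin hBfin] at hSAB
        have h0 := hρann η (fun e he => by rw [hηdef]; simp only; rw [if_neg he])
        rw [HsumF, finsum_mem_union hABdisj hAfin hBfin] at h0
        have hAval : (∑ᶠ x ∈ sideSet L a b,
            ρ s(v, x) * pdist (restrict G (G.support \ {a, b})) η s(v, x)) =
            (∑ᶠ x ∈ sideSet L a b, ρ s(v, x)) * (-δ s(a, v)) := by
          rw [← finsum_mem_mul_const hAfin]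
          exact finsum_mem_congr rfl fun x hx => by
            rw [pdist_eq_tdist, hηcongr v x, valA x hx]
        have hBval : (∑ᶠ x ∈ sideSet L b a,
            ρ s(v, x) * pdist (restrict G (G.support \ {a, b})) η s(v, x)) =
            (∑ᶠ x ∈ sideSet L b a, ρ s(v, x)) * (-δ s(b, v)) := by
          rw [← finsum_mem_mul_const hBfin]
          exact finsum_mem_congr rfl fun x hx => by
            rw [pdist_eq_tdist, hηcongr v x, valB x hx]
        have hIval : (∑ᶠ c ∈ innerCords L a b,
            ρ c * pdist (restrict G (G.support \ {a, b})) η c) = 0 := by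
          refine finsum_mem_eq_zero fun c hcI => ?_
          obtain ⟨p, q, hceq, _, _, _, _, _, _, _⟩ := inner_rep hL hcI
          rw [hceq, pdist_eq_tdist, hηcongr p q, valI c hcI p q hceq, mul_zero]
        rw [hAval, hBval, hIval] at h0
        have hSB : (∑ᶠ x ∈ sideSet L b a, ρ s(v, x)) =
            -(∑ᶠ x ∈ sideSet L a b, ρ s(v, x)) := by linarith
        rw [hSB] at h0
        have hprod : (∑ᶠ x ∈ sideSet L a b, ρ s(v, x)) * δ s(a, v) = 0 := by
          have hβ : δ s(b, v) = -δ s(a, v) := by linarith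
          rw [hβ] at h0
          linear_combination (-(1 : ℝ) / 2) * h0
        rcases mul_eq_zero.mp hprod with h | h
        · exact absurd h hSA
        · exact h
    have hβ : δ s(b, v) = 0 := by linarith
    have hηz : ∀ x y : U, s(x, y) ∈ cherryLU L a b v →
        tdist (restrict G (G.support \ {a, b})) η x y = 0 := by
      intro x y hxy
      rcases hLUcases _ hxy with ⟨x', hx', heq⟩ | hinner
      · rw [tdist_of_sym2_eq η heq, hηcongr v x']
        rcases hx' with hx' | hx'
        · rw [valA x' hx', hα, neg_zero]
        · rw [valB x' hx', hβ, neg_zero]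
      · rw [hηcongr x y]
        exact valI _ hinner x y rfl
    have hη0 : η = 0 := hKU η (fun e he => by rw [hηdef]; simp only; rw [if_neg he]) hηz
    funext e
    by_cases heU : e ∈ (restrict G (G.support \ {a, b})).edgeSet
    · have h := congrFun hη0 e
      rw [hηdef] at h
      simp only [Pi.zero_apply] at h
      rw [if_pos heU] at h
      exact h
    · by_cases heE : e ∈ G.edgeSet
      · have : e ∈ ({s(a, v), s(b, v)} : Set (Sym2 U)) := by
          by_contra hne
          exact heU (by rw [hc.TU_edgeSet]; exact ⟨heE, hne⟩)
        rcases this with h | h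
        · rw [h]; exact hα
        · rw [Set.mem_singleton_iff] at h
          rw [h]; exact hβ
      · exact hsupp e heE
end Lasso
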